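/- arXiv:2311.16049 — 9 statements merged into one kernel-verified Lean document; each statement's English description precedes it below -/
import Mathlib

section
/- If the initial data are nonnegative, i.e. S0 ≥ 0, V0 ≥ 0 and e0, a0, i0 ∈ L¹(ℝ≥0; ℝ≥0), then the unique continuous solution (β, α, ι) of the Volterra system satisfies β(t) ≥ 0, α(t) ≥ 0 and ι(t) ≥ 0 for all t ≥ 0. -/
open MeasureTheory Filter

noncomputable section

/-- Survival kernel of the exposed class: `π_E(θ) = exp(−∫₀^θ (k(τ)+μ) dτ)`. -/
def piE (μ : ℝ) (k : ℝ → ℝ) (θ : ℝ) : ℝ :=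
  Real.exp (-(∫ τ in (0:ℝ)..θ, (k τ + μ)))

/-- Survival kernel of the asymptomatic class:
`π_A(θ) = exp(−∫₀^θ (γ_A ξ + χ(1−ξ) + μ) dτ)`. -/
def piA (μ : ℝ) (γA ξ χ : ℝ → ℝ) (θ : ℝ) : ℝ :=
  Real.exp (-(∫ τ in (0:ℝ)..θ, (γA τ * ξ τ + χ τ * (1 - ξ τ) + μ)))

/-- Survival kernel of the symptomatic class: `π_I(θ) = exp(−∫₀^θ (γ_I(τ)+μ) dτ)`. -/
def piI (μ : ℝ) (γI : ℝ → ℝ) (θ : ℝ) : ℝ :=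
  Real.exp (-(∫ τ in (0:ℝ)..θ, (γI τ + μ)))

/-- An essentially bounded measurable nonnegative coefficient on `ℝ≥0`
(element of `L∞(ℝ≥0; ℝ≥0)`). -/
def CoeffBM (f : ℝ → ℝ) : Prop :=
  Measurable f ∧ (∃ C : ℝ, ∀ θ, 0 ≤ θ → f θ ≤ C) ∧ (∀ θ, 0 ≤ θ → 0 ≤ f θ)

/-- A measurable coefficient with values in `[0,1]` on `ℝ≥0`
(element of `L∞(ℝ≥0; [0,1])`). -/
def FracBM (f : ℝ → ℝ) : Prop :=
  Measurable f ∧ ∀ θ, 0 ≤ θ → f θ ∈ Set.Icc (0:ℝ) 1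

/-- A bounded continuous nonnegative coefficient on `ℝ≥0`. -/
def CoeffBC (f : ℝ → ℝ) : Prop :=
  Continuous f ∧ (∃ C : ℝ, ∀ θ, 0 ≤ θ → f θ ≤ C) ∧ (∀ θ, 0 ≤ θ → 0 ≤ f θ)

/-- A continuous coefficient with values in `[0,1]` on `ℝ≥0`. -/
def FracBC (f : ℝ → ℝ) : Prop :=
  Continuous f ∧ ∀ θ, 0 ≤ θ → f θ ∈ Set.Icc (0:ℝ) 1

/-- Variation-of-constants expression `S[b]` for the susceptible compartment. -/
def Ssol (μ N0 p S0 : ℝ) (b : ℝ → ℝ) (t : ℝ) : ℝ :=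
  S0 * Real.exp (-(∫ s in (0:ℝ)..t, (p + b s + μ))) +
    μ * N0 * ∫ s in (0:ℝ)..t, Real.exp (-(∫ τ in s..t, (p + b τ + μ)))

/-- Variation-of-constants expression `V[b]` for the vaccinated compartment. -/
def Vsol (μ N0 p ζ ε S0 V0 : ℝ) (b : ℝ → ℝ) (t : ℝ) : ℝ :=
  V0 * Real.exp (-(∫ s in (0:ℝ)..t, (ζ * ε + b s * (1 - ε) + μ))) +
    p * ∫ s in (0:ℝ)..t, Ssol μ N0 p S0 b s *
      Real.exp (-(∫ τ in s..t, (ζ * ε + b τ * (1 - ε) + μ)))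

/-- The boundary value `ε̃(t) = β(t)·(S(t) + (1−ε)V(t))`. -/
def epsTilde (μ N0 p ζ ε S0 V0 : ℝ) (β : ℝ → ℝ) (t : ℝ) : ℝ :=
  β t * (Ssol μ N0 p S0 β t + (1 - ε) * Vsol μ N0 p ζ ε S0 V0 β t)

/-- Age density along characteristics: initial datum `f0` transported below the
diagonal, boundary datum `bdry` transported above the diagonal, with survival
kernel `π`. -/
def dens (π f0 bdry : ℝ → ℝ) (t θ : ℝ) : ℝ :=
  if t < θ then f0 (θ - t) * π θ / π (θ - t) else bdry (t - θ) * π θ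

/-- The Volterra integral system for the triple `(β, α, ι)` of boundary values. -/
def VolterraSystem (μ N0 p ζ ε S0 V0 : ℝ)
    (βA βI k χ γA γI q ξ e0 a0 i0 β α ι : ℝ → ℝ) : Prop :=
  ContinuousOn β (Set.Ici 0) ∧ ContinuousOn α (Set.Ici 0) ∧ ContinuousOn ι (Set.Ici 0) ∧
    ∀ t, 0 ≤ t →
      β t = (∫ s in (0:ℝ)..t,
          (βA (t - s) * α s * piA μ γA ξ χ (t - s) +
            βI (t - s) * ι s * piI μ γI (t - s))) +
        (∫ s in Set.Ioi (0:ℝ),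
          (βA (t + s) * a0 s * piA μ γA ξ χ (t + s) / piA μ γA ξ χ s +
            βI (t + s) * i0 s * piI μ γI (t + s) / piI μ γI s)) ∧
      α t = (∫ s in (0:ℝ)..t,
          k (t - s) * q (t - s) * β s *
            (Ssol μ N0 p S0 β s + (1 - ε) * Vsol μ N0 p ζ ε S0 V0 β s) * piE μ k (t - s)) +
        (∫ s in Set.Ioi (0:ℝ),
          k (t + s) * q (t + s) * e0 s * piE μ k (t + s) / piE μ k s) ∧
      ι t = (∫ s in (0:ℝ)..t,
          (k (t - s) * (1 - q (t - s)) * β s *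
              (Ssol μ N0 p S0 β s + (1 - ε) * Vsol μ N0 p ζ ε S0 V0 β s) * piE μ k (t - s) +
            χ (t - s) * (1 - ξ (t - s)) * α s * piA μ γA ξ χ (t - s))) +
        (∫ s in Set.Ioi (0:ℝ),
          (k (t + s) * (1 - q (t + s)) * e0 s * piE μ k (t + s) / piE μ k s +
            χ (t + s) * (1 - ξ (t + s)) * a0 s * piA μ γA ξ χ (t + s) / piA μ γA ξ χ s))

/-- `R_A = (∫₀^∞ k q π_E)·(∫₀^∞ β_A π_A)`. -/
def RAdef (μ : ℝ) (βA k q γA ξ χ : ℝ → ℝ) : ℝ :=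
  (∫ s in Set.Ioi (0:ℝ), k s * q s * piE μ k s) *
    (∫ s in Set.Ioi (0:ℝ), βA s * piA μ γA ξ χ s)

/-- `R_I = (∫₀^∞ k(1−q)π_E + (∫₀^∞ k q π_E)·(∫₀^∞ χ(1−ξ)π_A))·(∫₀^∞ β_I π_I)`. -/
def RIdef (μ : ℝ) (βI k q χ ξ γA γI : ℝ → ℝ) : ℝ :=
  ((∫ s in Set.Ioi (0:ℝ), k s * (1 - q s) * piE μ k s) +
      (∫ s in Set.Ioi (0:ℝ), k s * q s * piE μ k s) *
        (∫ s in Set.Ioi (0:ℝ), χ s * (1 - ξ s) * piA μ γA ξ χ s)) *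
    (∫ s in Set.Ioi (0:ℝ), βI s * piI μ γI s)

/-- The basic reproduction number `R₀`. -/
def R0def (μ N0 p ζ ε : ℝ) (βA βI k χ γA γI q ξ : ℝ → ℝ) : ℝ :=
  (μ * N0 / (p + μ)) * (1 + p * (1 - ε) / (ζ * ε + μ)) *
    (RAdef μ βA k q γA ξ χ + RIdef μ βI k q χ ξ γA γI)

/-- A steady state of the age-structured SVEAIR problem. -/
def SteadyState (μ N0 p ζ ε : ℝ) (βA βI k χ γA γI q ξ : ℝ → ℝ)
    (Sst Vst βst εst αst ιst : ℝ) (est ast ist : ℝ → ℝ) : Prop :=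
  0 ≤ Sst ∧ 0 ≤ Vst ∧ 0 ≤ βst ∧ 0 ≤ εst ∧ 0 ≤ αst ∧ 0 ≤ ιst ∧
    (∀ θ, 0 ≤ θ → 0 ≤ est θ) ∧ (∀ θ, 0 ≤ θ → 0 ≤ ast θ) ∧ (∀ θ, 0 ≤ θ → 0 ≤ ist θ) ∧
    Sst = μ * N0 / (p + βst + μ) ∧
    Vst = p * Sst / (ζ * ε + βst * (1 - ε) + μ) ∧
    (∀ θ, 0 ≤ θ → est θ = εst * piE μ k θ) ∧
    (∀ θ, 0 ≤ θ → ast θ = αst * piA μ γA ξ χ θ) ∧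
    (∀ θ, 0 ≤ θ → ist θ = ιst * piI μ γI θ) ∧
    εst = βst * (Sst + (1 - ε) * Vst) ∧
    αst = (∫ θ in Set.Ioi (0:ℝ), k θ * q θ * est θ) ∧
    ιst = (∫ θ in Set.Ioi (0:ℝ), (k θ * (1 - q θ) * est θ + χ θ * (1 - ξ θ) * ast θ)) ∧
    βst = (∫ θ in Set.Ioi (0:ℝ), (βA θ * ast θ + βI θ * ist θ))

/-- The scalar function `g` whose fixed points characterize steady states. -/
def gfun (μ N0 p ζ ε RA RI β : ℝ) : ℝ :=
  (μ * N0 / (p + β + μ)) * (1 + p * (1 - ε) / (ζ * ε + β * (1 - ε) + μ)) * (RA + RI)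

/-- The Lyapunov weight `f_I`. -/
def fIfun (μ M : ℝ) (βI γI : ℝ → ℝ) (θ : ℝ) : ℝ :=
  M * ∫ s in Set.Ioi θ, βI s * Real.exp (-(∫ τ in θ..s, (γI τ + μ)))

/-- The Lyapunov weight `f_A`. -/
def fAfun (μ M : ℝ) (βA βI γA γI ξ χ : ℝ → ℝ) (θ : ℝ) : ℝ :=
  M * (∫ s in Set.Ioi θ,
      βA s * Real.exp (-(∫ τ in θ..s, (γA τ * ξ τ + χ τ * (1 - ξ τ) + μ)))) +
    fIfun μ M βI γI 0 * ∫ s in Set.Ioi θ,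
      χ s * (1 - ξ s) * Real.exp (-(∫ τ in θ..s, (γA τ * ξ τ + χ τ * (1 - ξ τ) + μ)))

/-- The Lyapunov weight `f_E`. -/
def fEfun (μ M : ℝ) (βA βI k q γA γI ξ χ : ℝ → ℝ) (θ : ℝ) : ℝ :=
  fAfun μ M βA βI γA γI ξ χ 0 *
      (∫ s in Set.Ioi θ, k s * q s * Real.exp (-(∫ τ in θ..s, (k τ + μ)))) +
    fIfun μ M βI γI 0 *
      ∫ s in Set.Ioi θ, k s * (1 - q s) * Real.exp (-(∫ τ in θ..s, (k τ + μ)))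

section Aux
open Set

/-- bounded + a.e.-strongly-measurable on `Icc a b` gives interval integrability. -/
lemma myIntervalIntegrable {f : ℝ → ℝ} {a b C : ℝ} (hab : a ≤ b)
    (hm : AEStronglyMeasurable f (volume.restrict (Icc a b)))
    (hb : ∀ x ∈ Icc a b, |f x| ≤ C) :
    IntervalIntegrable f volume a b := by
  have hI : IntegrableOn f (Icc a b) := by
    refine Integrable.mono' (g := fun _ => C) (integrableOn_const measure_Icc_lt_top.ne) hm ?_
    filter_upwards [ae_restrict_mem measurableSet_Icc] with x hx
    simpa using hb x hx
  rw [intervalIntegrable_iff, uIoc_of_le hab]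
  exact hI.mono_set Ioc_subset_Icc_self

lemma gronwall_zero {n : ℝ → ℝ} {K T : ℝ} (hK : 0 ≤ K) (hT : 0 ≤ T)
    (hn : ContinuousOn n (Icc 0 T)) (hpos : ∀ t ∈ Icc 0 T, 0 ≤ n t)
    (h : ∀ t ∈ Icc 0 T, n t ≤ K * ∫ s in (0:ℝ)..t, n s) :
    ∀ t ∈ Icc 0 T, n t = 0 := by
  obtain ⟨M, hM⟩ := (isCompact_Icc (a := (0:ℝ)) (b := T)).exists_bound_of_continuousOn hn
  have hM0 : 0 ≤ M := le_trans (abs_nonneg _) (by simpa using hM 0 ⟨le_refl _, hT⟩)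
  have key : ∀ m : ℕ, ∀ t ∈ Icc (0:ℝ) T, n t ≤ M * K ^ m * t ^ m / (Nat.factorial m) := by
    intro m
    induction m with
    | zero => intro t ht; simpa using (le_abs_self _).trans (hM t ht)
    | succ m ih =>
      intro t ht
      have ht0 : (0:ℝ) ≤ t := ht.1
      have hint_n : IntervalIntegrable n volume 0 t :=
        ContinuousOn.intervalIntegrable
          (by rw [uIcc_of_le ht0]; exact hn.mono (Icc_subset_Icc le_rfl ht.2))
      have hbound : ∀ s ∈ Icc (0:ℝ) t, n s ≤ M * K ^ m * s ^ m / (Nat.factorial m) := by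
        intro s hs; exact ih s ⟨hs.1, hs.2.trans ht.2⟩
      have hint_g : IntervalIntegrable (fun s => M * K ^ m * s ^ m / (Nat.factorial m))
          volume 0 t := ((by continuity : Continuous (fun s : ℝ => M * K ^ m * s ^ m / (Nat.factorial m))).intervalIntegrable 0 t)
      have hIle : (∫ s in (0:ℝ)..t, n s) ≤
          ∫ s in (0:ℝ)..t, M * K ^ m * s ^ m / (Nat.factorial m) :=
        intervalIntegral.integral_mono_on ht0 hint_n hint_g hbound
      have hIval : (∫ s in (0:ℝ)..t, M * K ^ m * s ^ m / (Nat.factorial m))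
          = M * K ^ m / (Nat.factorial m) * (t ^ (m+1) / (m+1)) := by
        have : (∫ s in (0:ℝ)..t, M * K ^ m * s ^ m / (Nat.factorial m))
            = M * K ^ m / (Nat.factorial m) * ∫ s in (0:ℝ)..t, s ^ m := by
          rw [← intervalIntegral.integral_const_mul]
          apply intervalIntegral.integral_congr; intro x hx; ring
        rw [this, integral_pow]; push_cast; ring
      calc n t ≤ K * ∫ s in (0:ℝ)..t, n s := h t ht
        _ ≤ K * (M * K ^ m / (Nat.factorial m) * (t ^ (m+1) / (m+1))) := by
            apply mul_le_mul_of_nonneg_left _ hK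
            rw [← hIval]; exact hIle
        _ = M * K ^ (m+1) * t ^ (m+1) / (Nat.factorial (m+1)) := by
            rw [Nat.factorial_succ]; push_cast
            rw [pow_succ]
            field_simp
            ring
  intro t ht
  have hlim : Tendsto (fun m : ℕ => M * (K * T) ^ m / (Nat.factorial m)) atTop (nhds 0) := by
    have := FloorSemiring.tendsto_pow_div_factorial_atTop (K * T)
    have h2 := this.const_mul M
    simpa [mul_div_assoc] using h2
  have hle : ∀ m : ℕ, n t ≤ M * (K * T) ^ m / (Nat.factorial m) := by
    intro m
    refine (key m t ht).trans ?_
    rw [mul_pow, ← mul_assoc]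
    have hfac : (0:ℝ) < (Nat.factorial m) := by positivity
    have : t ^ m ≤ T ^ m := pow_le_pow_left₀ ht.1 ht.2 m
    have hMK : 0 ≤ M * K ^ m := by positivity
    rw [div_le_div_iff_of_pos_right hfac]
    nlinarith [pow_nonneg ht.1 m]
  have : n t ≤ 0 := ge_of_tendsto hlim (Eventually.of_forall hle)
  exact le_antisymm this (hpos t ht)

lemma integrableOn_Icc_of_bounded {f : ℝ → ℝ} {a b C : ℝ}
    (hm : AEStronglyMeasurable f (volume.restrict (Icc a b)))
    (hb : ∀ x ∈ Icc a b, |f x| ≤ C) :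
    IntegrableOn f (Icc a b) := by
  refine Integrable.mono' (g := fun _ => C)
    (integrableOn_const measure_Icc_lt_top.ne) hm ?_
  filter_upwards [ae_restrict_mem measurableSet_Icc] with x hx
  simpa using hb x hx

lemma expNegPrimitive_contOn {g : ℝ → ℝ} {T : ℝ} (hT : 0 ≤ T)
    (hInt : IntegrableOn g (Icc 0 T)) :
    ContinuousOn (fun θ : ℝ => Real.exp (-(∫ τ in (0:ℝ)..θ, g τ))) (Icc 0 T) := by
  have hprim : ContinuousOn (fun θ : ℝ => ∫ τ in (0:ℝ)..θ, g τ) (Icc 0 T) := by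
    have := intervalIntegral.continuousOn_primitive_interval
      (a := (0:ℝ)) (b := T) (μ := volume) (f := g) (by rwa [uIcc_of_le hT])
    rwa [uIcc_of_le hT] at this
  exact Real.continuous_exp.comp_continuousOn hprim.neg

lemma expNeg_le_one {g : ℝ → ℝ} {θ : ℝ} (hθ : 0 ≤ θ) (hg : ∀ τ ∈ Icc (0:ℝ) θ, 0 ≤ g τ) :
    Real.exp (-(∫ τ in (0:ℝ)..θ, g τ)) ≤ 1 := by
  rw [Real.exp_le_one_iff, neg_nonpos]
  exact intervalIntegral.integral_nonneg hθ hg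

/-- Generic variation-of-constants form. -/
noncomputable def SVform (c : ℝ) (f g : ℝ → ℝ) (s : ℝ) : ℝ :=
  c * Real.exp (-(∫ τ in (0:ℝ)..s, f τ)) +
    ∫ r in (0:ℝ)..s, g r * Real.exp (-(∫ τ in r..s, f τ))

lemma SVform_contOn {c T : ℝ} {f g : ℝ → ℝ} (hT : 0 ≤ T)
    (hf : ContinuousOn f (Icc 0 T)) (hg : ContinuousOn g (Icc 0 T)) :
    ContinuousOn (SVform c f g) (Icc 0 T) := by
  have hfi : IntegrableOn f (Icc 0 T) := hf.integrableOn_Icc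
  have hFc : ContinuousOn (fun s : ℝ => ∫ τ in (0:ℝ)..s, f τ) (Icc 0 T) := by
    have := intervalIntegral.continuousOn_primitive_interval
      (a := (0:ℝ)) (b := T) (μ := volume) (f := f) (by rwa [uIcc_of_le hT])
    rwa [uIcc_of_le hT] at this
  have hexpc : ContinuousOn (fun s : ℝ => Real.exp (-(∫ τ in (0:ℝ)..s, f τ))) (Icc 0 T) :=
    Real.continuous_exp.comp_continuousOn hFc.neg
  have hic : ContinuousOn (fun r : ℝ => g r * Real.exp (∫ τ in (0:ℝ)..r, f τ)) (Icc 0 T) :=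
    hg.mul (Real.continuous_exp.comp_continuousOn hFc)
  have hGc : ContinuousOn (fun s : ℝ =>
      ∫ r in (0:ℝ)..s, g r * Real.exp (∫ τ in (0:ℝ)..r, f τ)) (Icc 0 T) := by
    have := intervalIntegral.continuousOn_primitive_interval
      (a := (0:ℝ)) (b := T) (μ := volume)
      (f := fun r : ℝ => g r * Real.exp (∫ τ in (0:ℝ)..r, f τ))
      (by rw [uIcc_of_le hT]; exact hic.integrableOn_Icc)
    rwa [uIcc_of_le hT] at this
  have hrw : ∀ s ∈ Icc (0:ℝ) T, SVform c f g s =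
      c * Real.exp (-(∫ τ in (0:ℝ)..s, f τ)) +
        (∫ r in (0:ℝ)..s, g r * Real.exp (∫ τ in (0:ℝ)..r, f τ)) *
          Real.exp (-(∫ τ in (0:ℝ)..s, f τ)) := by
    intro s hs
    simp only [SVform]
    congr 1
    rw [← intervalIntegral.integral_mul_const]
    apply intervalIntegral.integral_congr
    intro r hr
    rw [uIcc_of_le hs.1] at hr
    have h0s : IntervalIntegrable f volume 0 s :=
      ContinuousOn.intervalIntegrable
        (by rw [uIcc_of_le hs.1]; exact hf.mono (Icc_subset_Icc le_rfl hs.2))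
    have h0r : IntervalIntegrable f volume 0 r :=
      ContinuousOn.intervalIntegrable
        (by rw [uIcc_of_le hr.1]
            exact hf.mono (Icc_subset_Icc le_rfl (hr.2.trans hs.2)))
    have hsub : (∫ τ in r..s, f τ)
        = (∫ τ in (0:ℝ)..s, f τ) - ∫ τ in (0:ℝ)..r, f τ :=
      (intervalIntegral.integral_interval_sub_left h0s h0r).symm
    dsimp only
    rw [hsub, mul_assoc, ← Real.exp_add]
    congr 2
    ring
  exact (continuousOn_const.mul hexpc |>.add (hGc.mul hexpc)).congr hrw

end Aux

section Aux2
open Set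

lemma abs_mul_le' {a b A B : ℝ} (ha : |a| ≤ A) (hb : |b| ≤ B) : |a * b| ≤ A * B := by
  rw [abs_mul]
  exact mul_le_mul ha hb (abs_nonneg _) ((abs_nonneg _).trans ha)

lemma key_lb {a pa x n C D : ℝ} (ha0 : 0 ≤ a) (haC : a ≤ C) (hpa0 : 0 ≤ pa)
    (hpaD : pa ≤ D) (hx : -n ≤ x) (hn : 0 ≤ n) : -(C * D * n) ≤ a * x * pa := by
  have hC : 0 ≤ C := ha0.trans haC
  have hD : 0 ≤ D := hpa0.trans hpaD
  have h1 : a * pa ≤ C * D := mul_le_mul haC hpaD hpa0 hC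
  have h3 : (a * pa) * (-n) ≤ (a * pa) * x := mul_le_mul_of_nonneg_left hx (mul_nonneg ha0 hpa0)
  nlinarith [mul_le_mul_of_nonneg_right h1 hn]

lemma Ssol_eq_SVform (μ N0 p S0 : ℝ) (β : ℝ → ℝ) :
    Ssol μ N0 p S0 β = SVform S0 (fun τ => p + β τ + μ) (fun _ => μ * N0) := by
  funext s
  simp only [Ssol, SVform]
  rw [← intervalIntegral.integral_const_mul]

lemma Vsol_eq_SVform (μ N0 p ζ ε S0 V0 : ℝ) (β : ℝ → ℝ) :
    Vsol μ N0 p ζ ε S0 V0 β = SVform V0 (fun τ => ζ * ε + β τ * (1 - ε) + μ)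
      (fun r => p * Ssol μ N0 p S0 β r) := by
  funext s
  simp only [Vsol, SVform]
  rw [← intervalIntegral.integral_const_mul]
  congr 1
  apply intervalIntegral.integral_congr
  intro r _
  dsimp only
  ring

end Aux2

set_option maxHeartbeats 2000000 in
/-- If the initial data are nonnegative, then the (unique)
continuous solution `(β, α, ι)` of the Volterra system is nonnegative on `ℝ≥0`. -/
theorem volterra_solution_nonneg
    (μ N0 p ζ ε S0 V0 : ℝ) (βA βI k χ γA γI q ξ e0 a0 i0 : ℝ → ℝ)
    (hμ : 0 < μ) (hN0 : 0 ≤ N0) (hp : 0 ≤ p) (hζ : 0 ≤ ζ) (hε : ε ∈ Set.Icc (0:ℝ) 1)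
    (hβA : CoeffBM βA) (hβI : CoeffBM βI) (hk : CoeffBM k) (hχ : CoeffBM χ)
    (hγA : CoeffBM γA) (hγI : CoeffBM γI) (hq : FracBM q) (hξ : FracBM ξ)
    (he0 : IntegrableOn e0 (Set.Ioi 0)) (ha0 : IntegrableOn a0 (Set.Ioi 0))
    (hi0 : IntegrableOn i0 (Set.Ioi 0))
    (hS0 : 0 ≤ S0) (hV0 : 0 ≤ V0)
    (he0nn : 0 ≤ᵐ[volume.restrict (Set.Ioi (0:ℝ))] e0)
    (ha0nn : 0 ≤ᵐ[volume.restrict (Set.Ioi (0:ℝ))] a0)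
    (hi0nn : 0 ≤ᵐ[volume.restrict (Set.Ioi (0:ℝ))] i0)
    (β α ι : ℝ → ℝ)
    (hsol : VolterraSystem μ N0 p ζ ε S0 V0 βA βI k χ γA γI q ξ e0 a0 i0 β α ι) :
    ∀ t, 0 ≤ t → 0 ≤ β t ∧ 0 ≤ α t ∧ 0 ≤ ι t := by
  obtain ⟨hβc, hαc, hιc, heqn⟩ := hsol
  obtain ⟨hβAm, ⟨CβA, hCβAb⟩, hβAnn⟩ := hβA
  obtain ⟨hβIm, ⟨CβI, hCβIb⟩, hβInn⟩ := hβI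
  obtain ⟨hkm, ⟨Ck, hCkb⟩, hknn⟩ := hk
  obtain ⟨hχm, ⟨Cχ, hCχb⟩, hχnn⟩ := hχ
  obtain ⟨hγAm, ⟨CγA, hCγAb⟩, hγAnn⟩ := hγA
  obtain ⟨hγIm, ⟨CγI, hCγIb⟩, hγInn⟩ := hγI
  obtain ⟨hqm, hqI⟩ := hq
  obtain ⟨hξm, hξI⟩ := hξ
  have hε0 : 0 ≤ ε := hε.1
  have hε1 : 0 ≤ 1 - ε := by linarith [hε.2]
  have hCβA0 : 0 ≤ CβA := le_trans (hβAnn 0 le_rfl) (hCβAb 0 le_rfl)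
  have hCβI0 : 0 ≤ CβI := le_trans (hβInn 0 le_rfl) (hCβIb 0 le_rfl)
  have hCk0 : 0 ≤ Ck := le_trans (hknn 0 le_rfl) (hCkb 0 le_rfl)
  have hCχ0 : 0 ≤ Cχ := le_trans (hχnn 0 le_rfl) (hCχb 0 le_rfl)
  have hpiApos : ∀ x, 0 < piA μ γA ξ χ x := fun _ => Real.exp_pos _
  have hpiIpos : ∀ x, 0 < piI μ γI x := fun _ => Real.exp_pos _
  have hpiEpos : ∀ x, 0 < piE μ k x := fun _ => Real.exp_pos _
  have hrEnn : ∀ τ, 0 ≤ τ → 0 ≤ k τ + μ := fun τ hτ => by linarith [hknn τ hτ, hμ.le]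
  have hrAnn : ∀ τ, 0 ≤ τ → 0 ≤ γA τ * ξ τ + χ τ * (1 - ξ τ) + μ := by
    intro τ hτ
    have h1 := hγAnn τ hτ
    have h2 := hχnn τ hτ
    have h3 := hξI τ hτ
    have h4 := mul_nonneg h1 h3.1
    have h5 := mul_nonneg h2 (by linarith [h3.2] : (0:ℝ) ≤ 1 - ξ τ)
    linarith [hμ.le]
  have hrInn : ∀ τ, 0 ≤ τ → 0 ≤ γI τ + μ := fun τ hτ => by linarith [hγInn τ hτ, hμ.le]
  have hpiAle : ∀ x, 0 ≤ x → piA μ γA ξ χ x ≤ 1 :=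
    fun x hx => expNeg_le_one hx (fun τ hτ => hrAnn τ hτ.1)
  have hpiEle : ∀ x, 0 ≤ x → piE μ k x ≤ 1 :=
    fun x hx => expNeg_le_one hx (fun τ hτ => hrEnn τ hτ.1)
  have hpiIle : ∀ x, 0 ≤ x → piI μ γI x ≤ 1 :=
    fun x hx => expNeg_le_one hx (fun τ hτ => hrInn τ hτ.1)
  -- nonnegativity of S, V, W
  have hSnn : ∀ s, 0 ≤ s → 0 ≤ Ssol μ N0 p S0 β s := by
    intro s hs
    simp only [Ssol]
    apply add_nonneg (mul_nonneg hS0 (Real.exp_pos _).le)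
    apply mul_nonneg (mul_nonneg hμ.le hN0)
    exact intervalIntegral.integral_nonneg hs (fun r _ => (Real.exp_pos _).le)
  have hVnn : ∀ s, 0 ≤ s → 0 ≤ Vsol μ N0 p ζ ε S0 V0 β s := by
    intro s hs
    simp only [Vsol]
    apply add_nonneg (mul_nonneg hV0 (Real.exp_pos _).le)
    apply mul_nonneg hp
    exact intervalIntegral.integral_nonneg hs
      (fun r hr => mul_nonneg (hSnn r hr.1) (Real.exp_pos _).le)
  have hWnn : ∀ s, 0 ≤ s →
      0 ≤ Ssol μ N0 p S0 β s + (1 - ε) * Vsol μ N0 p ζ ε S0 V0 β s :=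
    fun s hs => add_nonneg (hSnn s hs) (mul_nonneg hε1 (hVnn s hs))
  -- the improper (initial-data) integrals are nonnegative
  have himpβ : ∀ u, 0 ≤ u → 0 ≤ ∫ s in Set.Ioi (0:ℝ),
      (βA (u + s) * a0 s * piA μ γA ξ χ (u + s) / piA μ γA ξ χ s +
        βI (u + s) * i0 s * piI μ γI (u + s) / piI μ γI s) := by
    intro u hu
    apply integral_nonneg_of_ae
    filter_upwards [ha0nn, hi0nn, ae_restrict_mem measurableSet_Ioi] with s h1 h2 hs
    have hus : 0 ≤ u + s := by
      have : (0:ℝ) < s := hs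
      linarith
    apply add_nonneg
    · exact div_nonneg (mul_nonneg (mul_nonneg (hβAnn _ hus) h1) (hpiApos _).le) (hpiApos _).le
    · exact div_nonneg (mul_nonneg (mul_nonneg (hβInn _ hus) h2) (hpiIpos _).le) (hpiIpos _).le
  have himpα : ∀ u, 0 ≤ u → 0 ≤ ∫ s in Set.Ioi (0:ℝ),
      k (u + s) * q (u + s) * e0 s * piE μ k (u + s) / piE μ k s := by
    intro u hu
    apply integral_nonneg_of_ae
    filter_upwards [he0nn, ae_restrict_mem measurableSet_Ioi] with s h1 hs
    have hus : 0 ≤ u + s := by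
      have : (0:ℝ) < s := hs
      linarith
    exact div_nonneg (mul_nonneg (mul_nonneg (mul_nonneg (hknn _ hus) (hqI _ hus).1) h1)
      (hpiEpos _).le) (hpiEpos _).le
  have himpι : ∀ u, 0 ≤ u → 0 ≤ ∫ s in Set.Ioi (0:ℝ),
      (k (u + s) * (1 - q (u + s)) * e0 s * piE μ k (u + s) / piE μ k s +
        χ (u + s) * (1 - ξ (u + s)) * a0 s * piA μ γA ξ χ (u + s) / piA μ γA ξ χ s) := by
    intro u hu
    apply integral_nonneg_of_ae
    filter_upwards [he0nn, ha0nn, ae_restrict_mem measurableSet_Ioi] with s h1 h2 hs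
    have hus : 0 ≤ u + s := by
      have : (0:ℝ) < s := hs
      linarith
    apply add_nonneg
    · exact div_nonneg (mul_nonneg (mul_nonneg (mul_nonneg (hknn _ hus)
        (by linarith [(hqI _ hus).2] : (0:ℝ) ≤ 1 - q (u + s))) h1) (hpiEpos _).le) (hpiEpos _).le
    · exact div_nonneg (mul_nonneg (mul_nonneg (mul_nonneg (hχnn _ hus)
        (by linarith [(hξI _ hus).2] : (0:ℝ) ≤ 1 - ξ (u + s))) h2) (hpiApos _).le) (hpiApos _).le
  -- main argument: fix a horizon T and show nonnegativity on [0, T]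
  intro T hT
  have hsubT : Set.Icc (0:ℝ) T ⊆ Set.Ici 0 := fun x hx => hx.1
  have hβcT : ContinuousOn β (Set.Icc 0 T) := hβc.mono hsubT
  have hαcT : ContinuousOn α (Set.Icc 0 T) := hαc.mono hsubT
  have hιcT : ContinuousOn ι (Set.Icc 0 T) := hιc.mono hsubT
  obtain ⟨Cβ, hCβ⟩ := isCompact_Icc.exists_bound_of_continuousOn hβcT
  obtain ⟨Cα, hCα⟩ := isCompact_Icc.exists_bound_of_continuousOn hαcT
  obtain ⟨Cι, hCι⟩ := isCompact_Icc.exists_bound_of_continuousOn hιcT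
  -- continuity of the survival kernels on [0, T]
  have hpiEcT : ContinuousOn (piE μ k) (Set.Icc 0 T) := by
    have h : piE μ k = fun θ => Real.exp (-(∫ τ in (0:ℝ)..θ, (k τ + μ))) := rfl
    rw [h]
    refine expNegPrimitive_contOn hT (integrableOn_Icc_of_bounded (C := Ck + μ)
      ((hkm.add measurable_const).aestronglyMeasurable) ?_)
    intro τ hτ
    rw [abs_of_nonneg (hrEnn τ hτ.1)]
    linarith [hCkb τ hτ.1]
  have hpiAcT : ContinuousOn (piA μ γA ξ χ) (Set.Icc 0 T) := by
    have h : piA μ γA ξ χ =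
        fun θ => Real.exp (-(∫ τ in (0:ℝ)..θ, (γA τ * ξ τ + χ τ * (1 - ξ τ) + μ))) := rfl
    rw [h]
    refine expNegPrimitive_contOn hT (integrableOn_Icc_of_bounded (C := CγA + Cχ + μ)
      (((hγAm.mul hξm).add (hχm.mul (measurable_const.sub hξm))).add
        measurable_const).aestronglyMeasurable ?_)
    intro τ hτ
    rw [abs_of_nonneg (hrAnn τ hτ.1)]
    nlinarith [hCγAb τ hτ.1, hγAnn τ hτ.1, (hξI τ hτ.1).1, (hξI τ hτ.1).2,
      hCχb τ hτ.1, hχnn τ hτ.1]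
  have hpiIcT : ContinuousOn (piI μ γI) (Set.Icc 0 T) := by
    have h : piI μ γI = fun θ => Real.exp (-(∫ τ in (0:ℝ)..θ, (γI τ + μ))) := rfl
    rw [h]
    refine expNegPrimitive_contOn hT (integrableOn_Icc_of_bounded (C := CγI + μ)
      ((hγIm.add measurable_const).aestronglyMeasurable) ?_)
    intro τ hτ
    rw [abs_of_nonneg (hrInn τ hτ.1)]
    linarith [hCγIb τ hτ.1]
  -- continuity and boundedness of S, V, W on [0, T]
  have hScT : ContinuousOn (Ssol μ N0 p S0 β) (Set.Icc 0 T) := by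
    rw [Ssol_eq_SVform]
    exact SVform_contOn hT ((continuousOn_const.add hβcT).add continuousOn_const)
      continuousOn_const
  have hVcT : ContinuousOn (Vsol μ N0 p ζ ε S0 V0 β) (Set.Icc 0 T) := by
    rw [Vsol_eq_SVform]
    exact SVform_contOn hT
      ((continuousOn_const.add (hβcT.mul continuousOn_const)).add continuousOn_const)
      (continuousOn_const.mul hScT)
  have hWcT : ContinuousOn
      (fun s => Ssol μ N0 p S0 β s + (1 - ε) * Vsol μ N0 p ζ ε S0 V0 β s)
      (Set.Icc 0 T) := hScT.add (continuousOn_const.mul hVcT)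
  obtain ⟨CW, hCWb⟩ := isCompact_Icc.exists_bound_of_continuousOn hWcT
  have hCW0 : 0 ≤ CW := le_trans (norm_nonneg _) (hCWb 0 ⟨le_rfl, hT⟩)
  have hWle : ∀ s ∈ Set.Icc (0:ℝ) T,
      Ssol μ N0 p S0 β s + (1 - ε) * Vsol μ N0 p ζ ε S0 V0 β s ≤ CW := by
    intro s hs
    exact le_trans (le_abs_self _) (by simpa [Real.norm_eq_abs] using hCWb s hs)
  -- the negativity gauge n
  set n : ℝ → ℝ := fun s => max (max (-β s) (-α s)) (max (-ι s) 0) with hndef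
  have hncT : ContinuousOn n (Set.Icc 0 T) :=
    ContinuousOn.sup (ContinuousOn.sup hβcT.neg hαcT.neg)
      (ContinuousOn.sup hιcT.neg continuousOn_const)
  have hnnn : ∀ s, 0 ≤ n s := fun s => le_trans (le_max_right _ _) (le_max_right _ _)
  have hβn : ∀ s, -β s ≤ n s := fun s => le_trans (le_max_left _ _) (le_max_left _ _)
  have hαn : ∀ s, -α s ≤ n s := fun s => le_trans (le_max_right _ _) (le_max_left _ _)
  have hιn : ∀ s, -ι s ≤ n s := fun s => le_trans (le_max_left _ _) (le_max_right _ _)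
  set K : ℝ := CβA + CβI + (Ck * CW + Cχ) with hKdef
  have hK0 : 0 ≤ K := by
    have := mul_nonneg hCk0 hCW0
    simp only [hKdef]
    linarith
  have hkey : ∀ u ∈ Set.Icc (0:ℝ) T, n u ≤ K * ∫ s in (0:ℝ)..u, n s := by
    intro u hu
    have hu0 : 0 ≤ u := hu.1
    have hsubu : Set.Icc (0:ℝ) u ⊆ Set.Icc 0 T := Set.Icc_subset_Icc le_rfl hu.2
    have hIn : IntervalIntegrable n volume 0 u :=
      ContinuousOn.intervalIntegrable (by rw [Set.uIcc_of_le hu0]; exact hncT.mono hsubu)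
    have hInn : 0 ≤ ∫ s in (0:ℝ)..u, n s :=
      intervalIntegral.integral_nonneg hu0 (fun s _ => hnnn s)
    obtain ⟨hEβ, hEα, hEι⟩ := heqn u hu0
    have hmsub : Measurable fun s : ℝ => u - s := measurable_const.sub measurable_id
    have hmapsTo : Set.MapsTo (fun s : ℝ => u - s) (Set.Icc 0 u) (Set.Icc 0 T) := by
      intro s hs
      simp only [Set.mem_Icc] at hs ⊢
      exact ⟨by linarith [hs.2], by linarith [hs.1, hu.2]⟩
    have hcsub : ContinuousOn (fun s : ℝ => u - s) (Set.Icc 0 u) :=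
      (continuous_const.sub continuous_id).continuousOn
    have haeβ : AEStronglyMeasurable β (volume.restrict (Set.Icc 0 u)) :=
      ((hβcT.mono hsubu).aemeasurable measurableSet_Icc).aestronglyMeasurable
    have haeα : AEStronglyMeasurable α (volume.restrict (Set.Icc 0 u)) :=
      ((hαcT.mono hsubu).aemeasurable measurableSet_Icc).aestronglyMeasurable
    have haeι : AEStronglyMeasurable ι (volume.restrict (Set.Icc 0 u)) :=
      ((hιcT.mono hsubu).aemeasurable measurableSet_Icc).aestronglyMeasurable
    have haeW : AEStronglyMeasurable
        (fun s => Ssol μ N0 p S0 β s + (1 - ε) * Vsol μ N0 p ζ ε S0 V0 β s)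
        (volume.restrict (Set.Icc 0 u)) :=
      ((hWcT.mono hsubu).aemeasurable measurableSet_Icc).aestronglyMeasurable
    have haepiA : AEStronglyMeasurable (fun s => piA μ γA ξ χ (u - s))
        (volume.restrict (Set.Icc 0 u)) :=
      (((hpiAcT.comp hcsub hmapsTo).aemeasurable measurableSet_Icc)).aestronglyMeasurable
    have haepiE : AEStronglyMeasurable (fun s => piE μ k (u - s))
        (volume.restrict (Set.Icc 0 u)) :=
      (((hpiEcT.comp hcsub hmapsTo).aemeasurable measurableSet_Icc)).aestronglyMeasurable
    have haepiI : AEStronglyMeasurable (fun s => piI μ γI (u - s))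
        (volume.restrict (Set.Icc 0 u)) :=
      (((hpiIcT.comp hcsub hmapsTo).aemeasurable measurableSet_Icc)).aestronglyMeasurable
    have haeβA : AEStronglyMeasurable (fun s => βA (u - s))
        (volume.restrict (Set.Icc 0 u)) := (hβAm.comp hmsub).aestronglyMeasurable
    have haeβI : AEStronglyMeasurable (fun s => βI (u - s))
        (volume.restrict (Set.Icc 0 u)) := (hβIm.comp hmsub).aestronglyMeasurable
    have haek : AEStronglyMeasurable (fun s => k (u - s))
        (volume.restrict (Set.Icc 0 u)) := (hkm.comp hmsub).aestronglyMeasurable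
    have haeq : AEStronglyMeasurable (fun s => q (u - s))
        (volume.restrict (Set.Icc 0 u)) := (hqm.comp hmsub).aestronglyMeasurable
    have haeχ : AEStronglyMeasurable (fun s => χ (u - s))
        (volume.restrict (Set.Icc 0 u)) := (hχm.comp hmsub).aestronglyMeasurable
    have haeξ : AEStronglyMeasurable (fun s => ξ (u - s))
        (volume.restrict (Set.Icc 0 u)) := (hξm.comp hmsub).aestronglyMeasurable
    have husnn : ∀ s ∈ Set.Icc (0:ℝ) u, 0 ≤ u - s := fun s hs => by linarith [hs.2]
    -- the β-equation estimate
    have hβineq : -β u ≤ (CβA + CβI) * ∫ s in (0:ℝ)..u, n s := by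
      have hptM : ∀ s ∈ Set.Icc (0:ℝ) u,
          |βA (u - s) * α s * piA μ γA ξ χ (u - s) +
            βI (u - s) * ι s * piI μ γI (u - s)| ≤ CβA * Cα * 1 + CβI * Cι * 1 := by
        intro s hs
        have hus := husnn s hs
        refine (abs_add_le _ _).trans (add_le_add ?_ ?_)
        · exact abs_mul_le' (abs_mul_le'
            (by rw [abs_of_nonneg (hβAnn _ hus)]; exact hCβAb _ hus)
            (by rw [← Real.norm_eq_abs]; exact hCα s (hsubu hs)))
            (by rw [abs_of_pos (hpiApos _)]; exact hpiAle _ hus)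
        · exact abs_mul_le' (abs_mul_le'
            (by rw [abs_of_nonneg (hβInn _ hus)]; exact hCβIb _ hus)
            (by rw [← Real.norm_eq_abs]; exact hCι s (hsubu hs)))
            (by rw [abs_of_pos (hpiIpos _)]; exact hpiIle _ hus)
      have hIf : IntervalIntegrable (fun s => βA (u - s) * α s * piA μ γA ξ χ (u - s) +
          βI (u - s) * ι s * piI μ γI (u - s)) volume 0 u :=
        myIntervalIntegrable hu0
          (((haeβA.mul haeα).mul haepiA).add ((haeβI.mul haeι).mul haepiI)) hptM
      have hlow : ∀ s ∈ Set.Icc (0:ℝ) u, (-(CβA + CβI)) * n s ≤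
          βA (u - s) * α s * piA μ γA ξ χ (u - s) +
            βI (u - s) * ι s * piI μ γI (u - s) := by
        intro s hs
        have hus := husnn s hs
        have h1 := key_lb (hβAnn _ hus) (hCβAb _ hus) (hpiApos _).le (hpiAle _ hus)
          (neg_le.mp (hαn s)) (hnnn s)
        have h2 := key_lb (hβInn _ hus) (hCβIb _ hus) (hpiIpos _).le (hpiIle _ hus)
          (neg_le.mp (hιn s)) (hnnn s)
        linarith [h1, h2]
      have hmono : (∫ s in (0:ℝ)..u, (-(CβA + CβI)) * n s) ≤
          ∫ s in (0:ℝ)..u, (βA (u - s) * α s * piA μ γA ξ χ (u - s) +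
            βI (u - s) * ι s * piI μ γI (u - s)) :=
        intervalIntegral.integral_mono_on hu0 (hIn.const_mul _) hIf hlow
      rw [intervalIntegral.integral_const_mul] at hmono
      have h2 := himpβ u hu0
      linarith [hEβ.le, hEβ.ge, hmono, h2]
    -- the α-equation estimate
    have hαineq : -α u ≤ Ck * CW * ∫ s in (0:ℝ)..u, n s := by
      have hptM : ∀ s ∈ Set.Icc (0:ℝ) u,
          |k (u - s) * q (u - s) * β s *
            (Ssol μ N0 p S0 β s + (1 - ε) * Vsol μ N0 p ζ ε S0 V0 β s) *
            piE μ k (u - s)| ≤ Ck * 1 * Cβ * CW * 1 := by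
        intro s hs
        have hus := husnn s hs
        refine abs_mul_le' (abs_mul_le' (abs_mul_le' (abs_mul_le'
          (by rw [abs_of_nonneg (hknn _ hus)]; exact hCkb _ hus)
          (abs_le.2 ⟨by linarith [(hqI _ hus).1], (hqI _ hus).2⟩))
          (by rw [← Real.norm_eq_abs]; exact hCβ s (hsubu hs)))
          (by rw [← Real.norm_eq_abs]; exact hCWb s (hsubu hs)))
          (by rw [abs_of_pos (hpiEpos _)]; exact hpiEle _ hus)
      have hIf : IntervalIntegrable (fun s => k (u - s) * q (u - s) * β s *
          (Ssol μ N0 p S0 β s + (1 - ε) * Vsol μ N0 p ζ ε S0 V0 β s) *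
          piE μ k (u - s)) volume 0 u :=
        myIntervalIntegrable hu0
          ((((haek.mul haeq).mul haeβ).mul haeW).mul haepiE) hptM
      have hlow : ∀ s ∈ Set.Icc (0:ℝ) u, (-(Ck * CW)) * n s ≤
          k (u - s) * q (u - s) * β s *
            (Ssol μ N0 p S0 β s + (1 - ε) * Vsol μ N0 p ζ ε S0 V0 β s) *
            piE μ k (u - s) := by
        intro s hs
        have hus := husnn s hs
        have ha0 : 0 ≤ k (u - s) * q (u - s) := mul_nonneg (hknn _ hus) (hqI _ hus).1
        have haC : k (u - s) * q (u - s) ≤ Ck :=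
          le_trans (mul_le_of_le_one_right (hknn _ hus) (hqI _ hus).2) (hCkb _ hus)
        have hpa0 : 0 ≤ (Ssol μ N0 p S0 β s + (1 - ε) * Vsol μ N0 p ζ ε S0 V0 β s) *
            piE μ k (u - s) := mul_nonneg (hWnn s hs.1) (hpiEpos _).le
        have hpaD : (Ssol μ N0 p S0 β s + (1 - ε) * Vsol μ N0 p ζ ε S0 V0 β s) *
            piE μ k (u - s) ≤ CW :=
          le_trans (mul_le_of_le_one_right (hWnn s hs.1) (hpiEle _ hus)) (hWle s (hsubu hs))
        have hkl := key_lb ha0 haC hpa0 hpaD (neg_le.mp (hβn s)) (hnnn s)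
        have hre : k (u - s) * q (u - s) * β s *
            (Ssol μ N0 p S0 β s + (1 - ε) * Vsol μ N0 p ζ ε S0 V0 β s) *
            piE μ k (u - s) =
            k (u - s) * q (u - s) * β s *
            ((Ssol μ N0 p S0 β s + (1 - ε) * Vsol μ N0 p ζ ε S0 V0 β s) *
            piE μ k (u - s)) := by ring
        rw [hre]
        linarith [hkl]
      have hmono : (∫ s in (0:ℝ)..u, (-(Ck * CW)) * n s) ≤
          ∫ s in (0:ℝ)..u, (k (u - s) * q (u - s) * β s *
            (Ssol μ N0 p S0 β s + (1 - ε) * Vsol μ N0 p ζ ε S0 V0 β s) *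
            piE μ k (u - s)) :=
        intervalIntegral.integral_mono_on hu0 (hIn.const_mul _) hIf hlow
      rw [intervalIntegral.integral_const_mul] at hmono
      have h2 := himpα u hu0
      linarith [hEα.le, hEα.ge, hmono, h2]
    -- the ι-equation estimate
    have hιineq : -ι u ≤ (Ck * CW + Cχ) * ∫ s in (0:ℝ)..u, n s := by
      have hptM : ∀ s ∈ Set.Icc (0:ℝ) u,
          |k (u - s) * (1 - q (u - s)) * β s *
            (Ssol μ N0 p S0 β s + (1 - ε) * Vsol μ N0 p ζ ε S0 V0 β s) *
            piE μ k (u - s) +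
            χ (u - s) * (1 - ξ (u - s)) * α s * piA μ γA ξ χ (u - s)| ≤
            Ck * 1 * Cβ * CW * 1 + Cχ * 1 * Cα * 1 := by
        intro s hs
        have hus := husnn s hs
        refine (abs_add_le _ _).trans (add_le_add ?_ ?_)
        · exact abs_mul_le' (abs_mul_le' (abs_mul_le' (abs_mul_le'
            (by rw [abs_of_nonneg (hknn _ hus)]; exact hCkb _ hus)
            (abs_le.2 ⟨by linarith [(hqI _ hus).2], by linarith [(hqI _ hus).1]⟩))
            (by rw [← Real.norm_eq_abs]; exact hCβ s (hsubu hs)))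
            (by rw [← Real.norm_eq_abs]; exact hCWb s (hsubu hs)))
            (by rw [abs_of_pos (hpiEpos _)]; exact hpiEle _ hus)
        · exact abs_mul_le' (abs_mul_le' (abs_mul_le'
            (by rw [abs_of_nonneg (hχnn _ hus)]; exact hCχb _ hus)
            (abs_le.2 ⟨by linarith [(hξI _ hus).2], by linarith [(hξI _ hus).1]⟩))
            (by rw [← Real.norm_eq_abs]; exact hCα s (hsubu hs)))
            (by rw [abs_of_pos (hpiApos _)]; exact hpiAle _ hus)
      have hIf : IntervalIntegrable (fun s => k (u - s) * (1 - q (u - s)) * β s *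
          (Ssol μ N0 p S0 β s + (1 - ε) * Vsol μ N0 p ζ ε S0 V0 β s) *
          piE μ k (u - s) +
          χ (u - s) * (1 - ξ (u - s)) * α s * piA μ γA ξ χ (u - s)) volume 0 u :=
        myIntervalIntegrable hu0
          (((((haek.mul (aestronglyMeasurable_const.sub haeq)).mul haeβ).mul haeW).mul
            haepiE).add
            (((haeχ.mul (aestronglyMeasurable_const.sub haeξ)).mul haeα).mul haepiA)) hptM
      have hlow : ∀ s ∈ Set.Icc (0:ℝ) u, (-(Ck * CW + Cχ)) * n s ≤
          k (u - s) * (1 - q (u - s)) * β s *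
            (Ssol μ N0 p S0 β s + (1 - ε) * Vsol μ N0 p ζ ε S0 V0 β s) *
            piE μ k (u - s) +
            χ (u - s) * (1 - ξ (u - s)) * α s * piA μ γA ξ χ (u - s) := by
        intro s hs
        have hus := husnn s hs
        have ha0 : 0 ≤ k (u - s) * (1 - q (u - s)) :=
          mul_nonneg (hknn _ hus) (by linarith [(hqI _ hus).2])
        have haC : k (u - s) * (1 - q (u - s)) ≤ Ck :=
          le_trans (mul_le_of_le_one_right (hknn _ hus)
            (by linarith [(hqI _ hus).1])) (hCkb _ hus)
        have hpa0 : 0 ≤ (Ssol μ N0 p S0 β s + (1 - ε) * Vsol μ N0 p ζ ε S0 V0 β s) *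
            piE μ k (u - s) := mul_nonneg (hWnn s hs.1) (hpiEpos _).le
        have hpaD : (Ssol μ N0 p S0 β s + (1 - ε) * Vsol μ N0 p ζ ε S0 V0 β s) *
            piE μ k (u - s) ≤ CW :=
          le_trans (mul_le_of_le_one_right (hWnn s hs.1) (hpiEle _ hus)) (hWle s (hsubu hs))
        have h1 := key_lb ha0 haC hpa0 hpaD (neg_le.mp (hβn s)) (hnnn s)
        have hb0 : 0 ≤ χ (u - s) * (1 - ξ (u - s)) :=
          mul_nonneg (hχnn _ hus) (by linarith [(hξI _ hus).2])
        have hbC : χ (u - s) * (1 - ξ (u - s)) ≤ Cχ :=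
          le_trans (mul_le_of_le_one_right (hχnn _ hus)
            (by linarith [(hξI _ hus).1])) (hCχb _ hus)
        have h2 := key_lb hb0 hbC (hpiApos _).le (hpiAle _ hus) (neg_le.mp (hαn s)) (hnnn s)
        have hre : k (u - s) * (1 - q (u - s)) * β s *
            (Ssol μ N0 p S0 β s + (1 - ε) * Vsol μ N0 p ζ ε S0 V0 β s) *
            piE μ k (u - s) =
            k (u - s) * (1 - q (u - s)) * β s *
            ((Ssol μ N0 p S0 β s + (1 - ε) * Vsol μ N0 p ζ ε S0 V0 β s) *
            piE μ k (u - s)) := by ring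
        rw [hre]
        linarith [h1, h2]
      have hmono : (∫ s in (0:ℝ)..u, (-(Ck * CW + Cχ)) * n s) ≤
          ∫ s in (0:ℝ)..u, (k (u - s) * (1 - q (u - s)) * β s *
            (Ssol μ N0 p S0 β s + (1 - ε) * Vsol μ N0 p ζ ε S0 V0 β s) *
            piE μ k (u - s) +
            χ (u - s) * (1 - ξ (u - s)) * α s * piA μ γA ξ χ (u - s)) :=
        intervalIntegral.integral_mono_on hu0 (hIn.const_mul _) hIf hlow
      rw [intervalIntegral.integral_const_mul] at hmono
      have h2 := himpι u hu0
      linarith [hEι.le, hEι.ge, hmono, h2]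
    -- combine the three estimates
    have hccW := mul_nonneg hCk0 hCW0
    have hterm : ∀ c : ℝ, 0 ≤ c → c ≤ K →
        c * (∫ s in (0:ℝ)..u, n s) ≤ K * ∫ s in (0:ℝ)..u, n s :=
      fun c _ hcK => mul_le_mul_of_nonneg_right hcK hInn
    simp only [hndef]
    refine max_le (max_le ?_ ?_) (max_le ?_ (mul_nonneg hK0 hInn))
    · refine hβineq.trans (hterm _ (by linarith) (by simp only [hKdef]; linarith))
    · refine hαineq.trans (hterm _ (by linarith) (by simp only [hKdef]; linarith))
    · refine hιineq.trans (hterm _ (by linarith) (by simp only [hKdef]; linarith))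
  -- Gronwall gives n ≡ 0 on [0, T]
  have hzero := gronwall_zero hK0 hT hncT (fun s _ => hnnn s) hkey
  have hnT : n T = 0 := hzero T ⟨hT, le_rfl⟩
  have h1 := hβn T
  have h2 := hαn T
  have h3 := hιn T
  rw [hnT] at h1 h2 h3
  exact ⟨by linarith, by linarith, by linarith⟩
end
end

section
/- Define e(t,θ) := e0(θ−t)·π_E(θ)/π_E(θ−t) for 0 ≤ t < θ and e(t,θ) := ε̃(t−θ)·π_E(θ) for 0 ≤ θ ≤ t. Then e(t,0) = ε̃(t) for all t > 0, e(0,θ) = e0(θ) for a.e. θ ≥ 0, and for almost every (t,θ) ∈ ℝ≥0 × ℝ≥0 the limit lim_{h→0} (e(t+h, θ+h) − e(t,θ))/h exists and equals −(k(θ)+μ)·e(t,θ). -/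
open MeasureTheory Filter

noncomputable section

section AuxLemmas
open Metric

private theorem aux_ftc (g : ℝ → ℝ) (hgm : Measurable g) (M : ℝ) (hgb : ∀ τ, |g τ| ≤ M) :
    ∀ᵐ x ∂(volume : Measure ℝ),
      Tendsto (fun h => (∫ t in x..(x+h), g t) / h) (nhdsWithin (0:ℝ) {(0:ℝ)}ᶜ) (nhds (g x)) := by
  have hloc : LocallyIntegrable g volume := by
    rw [locallyIntegrable_iff]
    intro K hK
    exact Measure.integrableOn_of_bounded hK.measure_lt_top.ne hgm.aestronglyMeasurable
      (Eventually.of_forall hgb)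
  filter_upwards [IsUnifLocDoublingMeasure.ae_tendsto_average_norm_sub
    (μ := (volume : Measure ℝ)) hloc 1] with x hx
  have hδ : Tendsto (fun h : ℝ => |h|/2) (nhdsWithin (0:ℝ) {(0:ℝ)}ᶜ)
      (nhdsWithin (0:ℝ) (Set.Ioi 0)) := by
    rw [tendsto_nhdsWithin_iff]
    refine ⟨?_, ?_⟩
    · have h2 : Tendsto (fun h : ℝ => |h|/2) (nhds 0) (nhds 0) := by
        simpa using (continuous_abs.div_const 2).tendsto (0:ℝ)
      exact h2.mono_left nhdsWithin_le_nhds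
    · filter_upwards [self_mem_nhdsWithin] with h hh
      simp only [Set.mem_Ioi]
      have hne : h ≠ 0 := hh
      have : 0 < |h| := abs_pos.mpr hne
      linarith
  have hmem : ∀ᶠ h : ℝ in nhdsWithin (0:ℝ) {(0:ℝ)}ᶜ,
      x ∈ closedBall (x + h/2) (1 * (|h|/2)) := by
    filter_upwards with h
    simp only [mem_closedBall, Real.dist_eq, one_mul]
    have e : x - (x + h/2) = -(h/2) := by ring
    rw [e, abs_neg, abs_div, abs_two]
  have havg := hx (fun h : ℝ => x + h/2) (fun h => |h|/2) hδ hmem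
  rw [tendsto_iff_norm_sub_tendsto_zero]
  apply squeeze_zero_norm' ?_ havg
  filter_upwards [self_mem_nhdsWithin] with h (hh : h ≠ 0)
  have hIg : IntervalIntegrable g volume x (x+h) := by
    rw [intervalIntegrable_iff]
    exact Measure.integrableOn_of_bounded (by rw [Set.uIoc]; exact measure_Ioc_lt_top.ne)
      hgm.aestronglyMeasurable (Eventually.of_forall hgb)
  have h1 : (∫ t in x..(x+h), g t)/h - g x = (∫ t in x..(x+h), (g t - g x))/h := by
    rw [intervalIntegral.integral_sub hIg intervalIntegrable_const,
      intervalIntegral.integral_const]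
    field_simp
    rw [smul_eq_mul, add_sub_cancel_left]
  have hsub : Set.uIoc x (x+h) ⊆ closedBall (x + h/2) (|h|/2) := by
    rw [Real.closedBall_eq_Icc]
    intro y hy
    rw [Set.mem_uIoc] at hy
    simp only [Set.mem_Icc]
    rcases abs_cases h with ⟨he, hs⟩ | ⟨he, hs⟩ <;> rw [he] <;>
      rcases hy with ⟨h1', h2'⟩ | ⟨h1', h2'⟩ <;> constructor <;> linarith
  have hball : IntegrableOn (fun y => ‖g y - g x‖) (closedBall (x + h/2) (|h|/2)) volume := by
    apply Measure.integrableOn_of_bounded (M := M + |g x|) measure_closedBall_lt_top.ne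
      ((hgm.sub measurable_const).norm).aestronglyMeasurable
    filter_upwards with y
    calc ‖‖g y - g x‖‖ = |g y - g x| := by simp [Real.norm_eq_abs]
      _ ≤ |g y| + |g x| := abs_sub _ _
      _ ≤ M + |g x| := by gcongr; exact hgb y
  rw [norm_norm]
  calc ‖(∫ t in x..(x+h), g t)/h - g x‖
      = ‖∫ t in x..(x+h), (g t - g x)‖ / |h| := by
        rw [h1, norm_div]; simp only [Real.norm_eq_abs]
    _ ≤ (∫ t in Set.uIoc x (x+h), ‖g t - g x‖) / |h| := by
        gcongr
        exact intervalIntegral.norm_integral_le_integral_norm_uIoc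
    _ ≤ (∫ y in closedBall (x + h/2) (|h|/2), ‖g y - g x‖) / |h| := by
        exact div_le_div_of_nonneg_right (setIntegral_mono_set hball (Eventually.of_forall fun y => norm_nonneg _)
            (HasSubset.Subset.eventuallyLE hsub)) (abs_nonneg _)
    _ = ⨍ y in closedBall (x + h/2) (|h|/2), ‖g y - g x‖ := by
        rw [setAverage_eq, measureReal_def, Real.volume_closedBall, smul_eq_mul]
        rw [ENNReal.toReal_ofReal (by positivity)]
        rw [div_eq_inv_mul]
        congr 2
        ring

private theorem aux_piE_slope (μ : ℝ) (k : ℝ → ℝ) (hμ : 0 < μ) (hk : CoeffBM k) :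
    ∀ᵐ x ∂(volume : Measure ℝ), 0 < x →
      Tendsto (fun h => (piE μ k (x + h) - piE μ k x) / h) (nhdsWithin (0:ℝ) {(0:ℝ)}ᶜ)
        (nhds (-(k x + μ) * piE μ k x)) := by
  obtain ⟨hkm, ⟨C, hC⟩, hknn⟩ := hk
  set g : ℝ → ℝ := fun τ => if 0 ≤ τ then k τ + μ else 0 with hgdef
  have hgm : Measurable g := Measurable.ite measurableSet_Ici (hkm.add_const μ) measurable_const
  have hC0 : (0:ℝ) ≤ C := le_trans (hknn 0 le_rfl) (hC 0 le_rfl)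
  set M : ℝ := C + μ with hMdef
  have hgb : ∀ τ, |g τ| ≤ M := by
    intro τ
    rw [hgdef]; dsimp only
    split_ifs with hτ
    · rw [abs_of_nonneg (by linarith [hknn τ hτ])]
      linarith [hC τ hτ]
    · rw [abs_zero]; positivity
  have hint : ∀ a b : ℝ, IntervalIntegrable g volume a b := by
    intro a b
    rw [intervalIntegrable_iff]
    exact Measure.integrableOn_of_bounded (by rw [Set.uIoc]; exact measure_Ioc_lt_top.ne)
      hgm.aestronglyMeasurable (Eventually.of_forall hgb)
  filter_upwards [aux_ftc g hgm M hgb] with x hA2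
  intro hx0
  have hpiE : ∀ θ : ℝ, 0 ≤ θ → piE μ k θ = Real.exp (-(∫ t in (0:ℝ)..θ, g t)) := by
    intro θ hθ
    have he : ∫ τ in (0:ℝ)..θ, (k τ + μ) = ∫ τ in (0:ℝ)..θ, g τ := by
      apply intervalIntegral.integral_congr
      intro τ hτ
      rw [Set.uIcc_of_le hθ] at hτ
      rw [hgdef]; dsimp only; rw [if_pos hτ.1]
    rw [piE, he]
  have hAb : ∀ h : ℝ, |∫ t in x..(x+h), g t| ≤ M * |h| := by
    intro h
    have := intervalIntegral.norm_integral_le_of_norm_le_const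
      (a := x) (b := x + h) (C := M) (f := g) (fun t _ => by
        rw [Real.norm_eq_abs]; exact hgb t)
    simpa [Real.norm_eq_abs, add_sub_cancel_left] using this
  have hA1 : Tendsto (fun h => ∫ t in x..(x+h), g t) (nhdsWithin (0:ℝ) {(0:ℝ)}ᶜ) (nhds 0) := by
    apply squeeze_zero_norm (fun h => by simpa [Real.norm_eq_abs] using hAb h)
    have : Tendsto (fun h : ℝ => M * |h|) (nhds 0) (nhds 0) := by
      have hc : Continuous fun h : ℝ => M * |h| := by fun_prop
      simpa using hc.tendsto (0:ℝ)
    exact this.mono_left nhdsWithin_le_nhds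
  have hev1 : ∀ᶠ h : ℝ in nhdsWithin (0:ℝ) {(0:ℝ)}ᶜ, |∫ t in x..(x+h), g t| ≤ 1 := by
    have hb : ∀ᶠ y : ℝ in nhds 0, |y| ≤ 1 := by
      filter_upwards [Metric.ball_mem_nhds (0:ℝ) one_pos] with y hy
      rw [mem_ball, Real.dist_eq, sub_zero] at hy
      exact hy.le
    exact hA1.eventually hb
  have hT1 : Tendsto
      (fun h => (Real.exp (-(∫ t in x..(x+h), g t)) - 1 + (∫ t in x..(x+h), g t)) / h)
      (nhdsWithin (0:ℝ) {(0:ℝ)}ᶜ) (nhds 0) := by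
    apply squeeze_zero_norm' (a := fun h => M^2 * |h|)
    · filter_upwards [hev1, self_mem_nhdsWithin] with h hA1h (hh : h ≠ 0)
      have hexp := Real.abs_exp_sub_one_sub_id_le (x := -(∫ t in x..(x+h), g t))
        (by rwa [abs_neg])
      have h0 : (0:ℝ) < |h| := abs_pos.mpr hh
      rw [Real.norm_eq_abs, abs_div]
      rw [div_le_iff₀ h0]
      calc |Real.exp (-(∫ t in x..(x+h), g t)) - 1 + (∫ t in x..(x+h), g t)|
          = |Real.exp (-(∫ t in x..(x+h), g t)) - 1 - (-(∫ t in x..(x+h), g t))| := by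
            ring_nf
        _ ≤ (-(∫ t in x..(x+h), g t))^2 := hexp
        _ = |∫ t in x..(x+h), g t|^2 := by rw [← sq_abs, abs_neg]
        _ ≤ (M * |h|)^2 := by
            apply pow_le_pow_left₀ (abs_nonneg _) (hAb h)
        _ = (M^2 * |h|) * |h| := by ring
    · have : Tendsto (fun h : ℝ => M^2 * |h|) (nhds 0) (nhds 0) := by
        have hc : Continuous fun h : ℝ => M^2 * |h| := by fun_prop
        simpa using hc.tendsto (0:ℝ)
      exact this.mono_left nhdsWithin_le_nhds
  have hE : Tendsto (fun h => (Real.exp (-(∫ t in x..(x+h), g t)) - 1) / h)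
      (nhdsWithin (0:ℝ) {(0:ℝ)}ᶜ) (nhds (-(g x))) := by
    have := hT1.sub hA2
    rw [zero_sub] at this
    apply this.congr
    intro h
    ring
  have hgx : g x = k x + μ := by rw [hgdef]; dsimp only; rw [if_pos hx0.le]
  have hfinal := hE.const_mul (piE μ k x)
  have hlim : piE μ k x * (-(g x)) = -(k x + μ) * piE μ k x := by rw [hgx]; ring
  rw [hlim] at hfinal
  apply hfinal.congr'
  have hevx : ∀ᶠ h : ℝ in nhdsWithin (0:ℝ) {(0:ℝ)}ᶜ, |h| < x := by
    apply Filter.Eventually.filter_mono nhdsWithin_le_nhds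
    have hb : ∀ᶠ y : ℝ in nhds (0:ℝ), |y| < x := by
      filter_upwards [Metric.ball_mem_nhds (0:ℝ) hx0] with y hy
      rwa [mem_ball, Real.dist_eq, sub_zero] at hy
    exact hb
  filter_upwards [hevx] with h hh
  have hxh : (0:ℝ) ≤ x + h := by
    rcases abs_lt.mp hh with ⟨h1, h2⟩; linarith
  rw [hpiE (x+h) hxh, hpiE x hx0.le]
  have hadd : (∫ t in (0:ℝ)..(x+h), g t) = (∫ t in (0:ℝ)..x, g t) + ∫ t in x..(x+h), g t :=
    (intervalIntegral.integral_add_adjacent_intervals (hint 0 x) (hint x (x+h))).symm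
  rw [hadd, neg_add, Real.exp_add]
  ring

end AuxLemmas

/-- The exposed age density defined along characteristics
satisfies the boundary condition for `t > 0`, the initial condition a.e., and
the transport equation a.e. in the sense of directional derivatives. -/
theorem exposed_density_transport
    (μ : ℝ) (k e0 εt : ℝ → ℝ)
    (hμ : 0 < μ) (hk : CoeffBM k)
    (hεt : ContinuousOn εt (Set.Ici 0))
    (he0 : IntegrableOn e0 (Set.Ioi 0)) :
    (∀ t, 0 < t → dens (piE μ k) e0 εt t 0 = εt t) ∧
    (dens (piE μ k) e0 εt 0 =ᵐ[volume.restrict (Set.Ioi (0:ℝ))] e0) ∧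
    (∀ᵐ z ∂((volume : Measure (ℝ × ℝ)).restrict (Set.Ici 0 ×ˢ Set.Ici 0)),
      Tendsto
        (fun h => (dens (piE μ k) e0 εt (z.1 + h) (z.2 + h) - dens (piE μ k) e0 εt z.1 z.2) / h)
        (nhdsWithin (0:ℝ) {(0:ℝ)}ᶜ)
        (nhds (-(k z.2 + μ) * dens (piE μ k) e0 εt z.1 z.2))) := by
  refine ⟨?_, ?_, ?_⟩
  · -- boundary condition
    intro t ht
    have hnlt : ¬ t < 0 := by linarith
    simp [dens, hnlt, piE, intervalIntegral.integral_same]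
  · -- initial condition a.e.
    filter_upwards [ae_restrict_mem measurableSet_Ioi] with θ hθ
    have hθ0 : (0:ℝ) < θ := hθ
    have hne : piE μ k θ ≠ 0 := Real.exp_ne_zero _
    simp only [dens, if_pos hθ0, sub_zero]
    rw [mul_div_assoc, div_self hne, mul_one]
  · -- transport equation a.e.
    have hslope := aux_piE_slope μ k hμ hk
    have hprod : ∀ᵐ z ∂(volume : Measure (ℝ × ℝ)), 0 < z.2 →
        Tendsto (fun h => (piE μ k (z.2 + h) - piE μ k z.2) / h)
          (nhdsWithin (0:ℝ) {(0:ℝ)}ᶜ) (nhds (-(k z.2 + μ) * piE μ k z.2)) := by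
      rw [MeasureTheory.Measure.volume_eq_prod]
      exact MeasureTheory.Measure.quasiMeasurePreserving_snd.ae hslope
    have hne0 : ∀ᵐ x ∂(volume : Measure ℝ), x ≠ (0:ℝ) := by
      rw [ae_iff]
      have : {a : ℝ | ¬ a ≠ 0} = {0} := by ext a; simp
      rw [this]
      exact measure_singleton 0
    have hne0' : ∀ᵐ z ∂(volume : Measure (ℝ × ℝ)), z.2 ≠ (0:ℝ) := by
      rw [MeasureTheory.Measure.volume_eq_prod]
      exact MeasureTheory.Measure.quasiMeasurePreserving_snd.ae hne0
    filter_upwards [ae_restrict_of_ae hprod, ae_restrict_of_ae hne0',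
      ae_restrict_mem (measurableSet_Ici.prod measurableSet_Ici)] with z hz hzne hzmem
    have hθpos : 0 < z.2 := lt_of_le_of_ne hzmem.2 (Ne.symm hzne)
    have hT := hz hθpos
    set Cv : ℝ := if z.1 < z.2 then e0 (z.2 - z.1) / piE μ k (z.2 - z.1) else εt (z.1 - z.2)
      with hCv
    have hC : ∀ h : ℝ, dens (piE μ k) e0 εt (z.1 + h) (z.2 + h) = Cv * piE μ k (z.2 + h) := by
      intro h
      have hiff : z.1 + h < z.2 + h ↔ z.1 < z.2 := add_lt_add_iff_right h
      have e1 : z.2 + h - (z.1 + h) = z.2 - z.1 := by ring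
      have e2 : z.1 + h - (z.2 + h) = z.1 - z.2 := by ring
      rw [dens, hCv]
      by_cases hcase : z.1 < z.2
      · rw [if_pos (hiff.mpr hcase), if_pos hcase, e1]; ring
      · rw [if_neg (fun hlt => hcase (hiff.mp hlt)), if_neg hcase, e2]
    have hC0 : dens (piE μ k) e0 εt z.1 z.2 = Cv * piE μ k z.2 := by
      have := hC 0
      simpa using this
    have hfin := hT.const_mul Cv
    have hlim : Cv * (-(k z.2 + μ) * piE μ k z.2)
        = -(k z.2 + μ) * dens (piE μ k) e0 εt z.1 z.2 := by
      rw [hC0]; ring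
    rw [hlim] at hfin
    apply hfin.congr
    intro h
    rw [hC h, hC0]
    ring
end
end

section
/- Any steady state satisfies the explicit formulas: e*(θ) = β*·M(β*)·π_E(θ), a*(θ) = β*·M(β*)·(∫₀^∞ k(s)q(s)π_E(s) ds)·π_A(θ), and i*(θ) = β*·M(β*)·(∫₀^∞ k(s)(1−q(s))π_E(s) ds + (∫₀^∞ k(s)q(s)π_E(s) ds)·(∫₀^∞ χ(s)(1−ξ(s))π_A(s) ds))·π_I(θ) for all θ ≥ 0, where M(β*) := (μN0/(p+β*+μ))·(1 + p(1−ε)/(ζε+β*(1−ε)+μ)). -/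
open MeasureTheory Filter

noncomputable section

lemma integrableOn_Icc_of_bdd {f : ℝ → ℝ} (hf : Measurable f) {C a b : ℝ}
    (h : ∀ x ∈ Set.Icc a b, |f x| ≤ C) :
    IntegrableOn f (Set.Icc a b) := by
  apply Integrable.mono' (integrable_const C) hf.aestronglyMeasurable.restrict
  filter_upwards [ae_restrict_mem measurableSet_Icc] with x hx
  simpa using h x hx

lemma contOn_primitive {f : ℝ → ℝ} (hf : Measurable f) {C : ℝ}
    (hC : ∀ θ, 0 ≤ θ → |f θ| ≤ C) :
    ContinuousOn (fun θ => ∫ τ in (0:ℝ)..θ, f τ) (Set.Ici 0) := by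
  intro θ hθ
  have hθ0 : (0:ℝ) ≤ θ := hθ
  have hint : IntegrableOn f (Set.uIcc 0 (θ + 1)) := by
    rw [Set.uIcc_of_le (by linarith)]
    exact integrableOn_Icc_of_bdd hf (fun x hx => hC x hx.1)
  have hcont := intervalIntegral.continuousOn_primitive_interval hint
  have hmem : θ ∈ Set.uIcc (0:ℝ) (θ + 1) := by
    rw [Set.uIcc_of_le (by linarith)]; exact ⟨hθ0, by linarith⟩
  have h1 := hcont θ hmem
  refine ContinuousWithinAt.mono_of_mem_nhdsWithin h1 ?_
  rw [Set.uIcc_of_le (by linarith)]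
  have : Set.Icc (0:ℝ) (θ + 1) = Set.Ici 0 ∩ Set.Iic (θ + 1) := by
    ext x; simp [Set.mem_Icc, and_comm]
  rw [this]
  exact inter_mem_nhdsWithin _ (Iic_mem_nhds (by linarith))

/-- Generic integrability lemma. -/
lemma integrable_mul_expPrim {g h : ℝ → ℝ} (hg : Measurable g) {Cg : ℝ}
    (hgb : ∀ θ, 0 ≤ θ → |g θ| ≤ Cg) (hh : Measurable h) {Ch : ℝ}
    (hhb : ∀ θ, 0 ≤ θ → |h θ| ≤ Ch) (hh0 : ∀ θ, 0 ≤ θ → 0 ≤ h θ)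
    {μ : ℝ} (hμ : 0 < μ) :
    IntegrableOn (fun θ => g θ * Real.exp (-(∫ τ in (0:ℝ)..θ, (h τ + μ)))) (Set.Ioi 0) := by
  have hhm : Measurable (fun τ => h τ + μ) := hh.add_const μ
  have hhmb : ∀ τ, 0 ≤ τ → |h τ + μ| ≤ Ch + μ := by
    intro τ hτ
    have := hhb τ hτ; have := hh0 τ hτ
    rw [abs_of_nonneg (by linarith)]
    have : h τ ≤ Ch := by have := hhb τ hτ; rw [abs_of_nonneg ‹0 ≤ h τ›] at this; linarith
    linarith
  -- measurability of primitive
  have hPcont : ContinuousOn (fun θ => ∫ τ in (0:ℝ)..θ, (h τ + μ)) (Set.Ici 0) :=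
    contOn_primitive hhm hhmb
  have hPmeas : AEMeasurable (fun θ => ∫ τ in (0:ℝ)..θ, (h τ + μ))
      (volume.restrict (Set.Ioi 0)) := by
    have h1 : AEMeasurable (fun θ => ∫ τ in (0:ℝ)..θ, (h τ + μ))
        (volume.restrict (Set.Ici 0)) := hPcont.aemeasurable measurableSet_Ici
    exact h1.mono_measure (Measure.restrict_mono Set.Ioi_subset_Ici_self le_rfl)
  have hasm : AEStronglyMeasurable
      (fun θ => g θ * Real.exp (-(∫ τ in (0:ℝ)..θ, (h τ + μ))))
      (volume.restrict (Set.Ioi 0)) := by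
    exact (hg.aemeasurable.mono_measure le_rfl).aestronglyMeasurable.mul
      ((Real.measurable_exp.comp_aemeasurable hPmeas.neg).aestronglyMeasurable)
  have hbound : IntegrableOn (fun θ => Cg * Real.exp (-(μ * θ))) (Set.Ioi 0) := by
    have h1 := (exp_neg_integrableOn_Ioi (0:ℝ) hμ).const_mul Cg
    exact (by simpa [neg_mul] using h1 : Integrable (fun x => Cg * Real.exp (-(μ * x))) (volume.restrict (Set.Ioi 0)))
  refine Integrable.mono' hbound hasm ?_
  filter_upwards [ae_restrict_mem measurableSet_Ioi] with θ hθ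
  have hθ0 : (0:ℝ) ≤ θ := le_of_lt hθ
  have hii : IntervalIntegrable (fun τ => h τ + μ) volume 0 θ := by
    apply IntegrableOn.intervalIntegrable
    rw [Set.uIcc_of_le hθ0]
    exact integrableOn_Icc_of_bdd hhm (fun x hx => hhmb x hx.1)
  have hmono : μ * θ ≤ ∫ τ in (0:ℝ)..θ, (h τ + μ) := by
    have : ∫ τ in (0:ℝ)..θ, μ ≤ ∫ τ in (0:ℝ)..θ, (h τ + μ) := by
      apply intervalIntegral.integral_mono_on hθ0 (intervalIntegrable_const) hii
      intro x hx; have := hh0 x hx.1; linarith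
    simpa [mul_comm] using this
  rw [norm_mul, Real.norm_eq_abs, Real.norm_eq_abs,
    abs_of_pos (Real.exp_pos _)]
  have h1 : Real.exp (-(∫ τ in (0:ℝ)..θ, (h τ + μ))) ≤ Real.exp (-(μ * θ)) :=
    Real.exp_le_exp.2 (by linarith)
  have h2 : |g θ| ≤ Cg := hgb θ hθ0
  have h3 : (0:ℝ) ≤ |g θ| := abs_nonneg _
  nlinarith [Real.exp_pos (-(∫ τ in (0:ℝ)..θ, (h τ + μ)))]

/-- Explicit formulas for a steady state: each of the
densities `e*, a*, i*` equals `β*·M(β*)` times an explicit constant times the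
corresponding survival kernel, where
`M(β*) = (μN0/(p+β*+μ))·(1 + p(1−ε)/(ζε+β*(1−ε)+μ))`. -/
theorem steady_state_explicit_formulas
    (μ N0 p ζ ε : ℝ) (βA βI k χ γA γI q ξ : ℝ → ℝ)
    (hμ : 0 < μ) (hN0 : 0 ≤ N0) (hp : 0 ≤ p) (hζ : 0 ≤ ζ) (hε : ε ∈ Set.Icc (0:ℝ) 1)
    (hβA : CoeffBM βA) (hβI : CoeffBM βI) (hk : CoeffBM k) (hχ : CoeffBM χ)
    (hγA : CoeffBM γA) (hγI : CoeffBM γI) (hq : FracBM q) (hξ : FracBM ξ)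
    (Sst Vst βst εst αst ιst : ℝ) (est ast ist : ℝ → ℝ)
    (hss : SteadyState μ N0 p ζ ε βA βI k χ γA γI q ξ Sst Vst βst εst αst ιst est ast ist) :
    ∀ θ, 0 ≤ θ →
      est θ = βst * ((μ * N0 / (p + βst + μ)) *
          (1 + p * (1 - ε) / (ζ * ε + βst * (1 - ε) + μ))) * piE μ k θ ∧
      ast θ = βst * ((μ * N0 / (p + βst + μ)) *
          (1 + p * (1 - ε) / (ζ * ε + βst * (1 - ε) + μ))) *
        (∫ s in Set.Ioi (0:ℝ), k s * q s * piE μ k s) * piA μ γA ξ χ θ ∧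
      ist θ = βst * ((μ * N0 / (p + βst + μ)) *
          (1 + p * (1 - ε) / (ζ * ε + βst * (1 - ε) + μ))) *
        ((∫ s in Set.Ioi (0:ℝ), k s * (1 - q s) * piE μ k s) +
          (∫ s in Set.Ioi (0:ℝ), k s * q s * piE μ k s) *
            (∫ s in Set.Ioi (0:ℝ), χ s * (1 - ξ s) * piA μ γA ξ χ s)) * piI μ γI θ := by
  
  obtain ⟨hS0, hV0, hβ0, hε0, hα0, hι0, he0, ha0, hi0, hS, hV, hE, hA, hI,
    hεeq, hαeq, hιeq, hβeq⟩ := hss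
  have hε1 : (0:ℝ) ≤ 1 - ε := by linarith [hε.2]
  have hD1 : (0:ℝ) < p + βst + μ := by linarith
  have hD2 : (0:ℝ) < ζ * ε + βst * (1 - ε) + μ := by
    have h1 : 0 ≤ ζ * ε := mul_nonneg hζ hε.1
    have h2 : 0 ≤ βst * (1 - ε) := mul_nonneg hβ0 hε1
    linarith
  have hεM : εst = βst * ((μ * N0 / (p + βst + μ)) *
      (1 + p * (1 - ε) / (ζ * ε + βst * (1 - ε) + μ))) := by
    rw [hεeq, hV, hS]
    field_simp
  -- bounds and measurability data
  obtain ⟨hkm, ⟨Ck, hCk⟩, hk0⟩ := hk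
  obtain ⟨hχm, ⟨Cχ, hCχ⟩, hχ0⟩ := hχ
  obtain ⟨hγAm, ⟨CγA, hCγA⟩, hγA0⟩ := hγA
  obtain ⟨hqm, hq01⟩ := hq
  obtain ⟨hξm, hξ01⟩ := hξ
  -- integrability of k·(1−q)·π_E on (0,∞)
  have hIntE : IntegrableOn (fun θ => k θ * (1 - q θ) * piE μ k θ) (Set.Ioi 0) := by
    have hg : Measurable (fun θ => k θ * (1 - q θ)) :=
      hkm.mul (measurable_const.sub hqm)
    have hgb : ∀ θ, 0 ≤ θ → |k θ * (1 - q θ)| ≤ Ck := by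
      intro θ hθ
      have h1 := hk0 θ hθ; have h2 := hCk θ hθ
      have h3 := (hq01 θ hθ).1; have h4 := (hq01 θ hθ).2
      rw [abs_of_nonneg (mul_nonneg h1 (by linarith))]
      nlinarith
    have hkb : ∀ θ, 0 ≤ θ → |k θ| ≤ Ck := by
      intro θ hθ; rw [abs_of_nonneg (hk0 θ hθ)]; exact hCk θ hθ
    have := integrable_mul_expPrim hg hgb hkm hkb hk0 hμ
    simpa [piE] using this
  -- integrability of χ·(1−ξ)·π_A on (0,∞)
  have hIntA : IntegrableOn (fun θ => χ θ * (1 - ξ θ) * piA μ γA ξ χ θ) (Set.Ioi 0) := by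
    have hg : Measurable (fun θ => χ θ * (1 - ξ θ)) :=
      hχm.mul (measurable_const.sub hξm)
    have hgb : ∀ θ, 0 ≤ θ → |χ θ * (1 - ξ θ)| ≤ Cχ := by
      intro θ hθ
      have h1 := hχ0 θ hθ; have h2 := hCχ θ hθ
      have h3 := (hξ01 θ hθ).1; have h4 := (hξ01 θ hθ).2
      rw [abs_of_nonneg (mul_nonneg h1 (by linarith))]
      nlinarith
    have hhm : Measurable (fun τ => γA τ * ξ τ + χ τ * (1 - ξ τ)) :=
      (hγAm.mul hξm).add (hχm.mul (measurable_const.sub hξm))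
    have hhb : ∀ θ, 0 ≤ θ → |γA θ * ξ θ + χ θ * (1 - ξ θ)| ≤ CγA + Cχ := by
      intro θ hθ
      have h1 := hγA0 θ hθ; have h2 := hCγA θ hθ
      have h3 := hχ0 θ hθ; have h4 := hCχ θ hθ
      have h5 := (hξ01 θ hθ).1; have h6 := (hξ01 θ hθ).2
      rw [abs_of_nonneg (by nlinarith)]
      nlinarith
    have hh0 : ∀ θ, 0 ≤ θ → 0 ≤ γA θ * ξ θ + χ θ * (1 - ξ θ) := by
      intro θ hθ
      have h1 := hγA0 θ hθ; have h3 := hχ0 θ hθ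
      have h5 := (hξ01 θ hθ).1; have h6 := (hξ01 θ hθ).2
      nlinarith
    have := integrable_mul_expPrim hg hgb hhm hhb hh0 hμ
    simpa [piA] using this
  -- α* = ε* · ∫ k q π_E
  have hαM : αst = εst * ∫ s in Set.Ioi (0:ℝ), k s * q s * piE μ k s := by
    rw [hαeq]
    have h1 : (∫ θ in Set.Ioi (0:ℝ), k θ * q θ * est θ)
        = ∫ θ in Set.Ioi (0:ℝ), εst * (k θ * q θ * piE μ k θ) :=
      setIntegral_congr_fun measurableSet_Ioi (fun θ hθ => by
        rw [hE θ (le_of_lt hθ)]; ring)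
    rw [h1, integral_const_mul]
  -- ι* = ε* · ∫ k(1−q)π_E + α* · ∫ χ(1−ξ)π_A
  have hι2 : ιst = εst * (∫ s in Set.Ioi (0:ℝ), k s * (1 - q s) * piE μ k s) +
      αst * ∫ s in Set.Ioi (0:ℝ), χ s * (1 - ξ s) * piA μ γA ξ χ s := by
    rw [hιeq]
    have h1 : (∫ θ in Set.Ioi (0:ℝ), (k θ * (1 - q θ) * est θ + χ θ * (1 - ξ θ) * ast θ))
        = ∫ θ in Set.Ioi (0:ℝ), (εst * (k θ * (1 - q θ) * piE μ k θ) +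
            αst * (χ θ * (1 - ξ θ) * piA μ γA ξ χ θ)) :=
      setIntegral_congr_fun measurableSet_Ioi (fun θ hθ => by
        rw [hE θ (le_of_lt hθ), hA θ (le_of_lt hθ)]; ring)
    rw [h1, integral_add (hIntE.const_mul εst) (hIntA.const_mul αst),
      integral_const_mul, integral_const_mul]
  intro θ hθ
  refine ⟨?_, ?_, ?_⟩
  · rw [hE θ hθ, hεM]
  · rw [hA θ hθ, hαM, hεM]
  · rw [hI θ hθ, hι2, hαM, hεM]; ring
end
end

section
/- For any steady state, the constant β* satisfies the scalar fixed-point equation β* = β*·(μN0/(p+β*+μ))·(1 + p(1−ε)/(ζε+β*(1−ε)+μ))·(R_A + R_I). -/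
open MeasureTheory Filter

noncomputable section

/-- Integrability of `f + μ` on bounded subsets of `ℝ≥0`. -/
lemma aux_integrableOn_Icc (f : ℝ → ℝ) (hf : Measurable f) (C : ℝ)
    (hb : ∀ θ, 0 ≤ θ → f θ ≤ C) (h0 : ∀ θ, 0 ≤ θ → 0 ≤ f θ) (μ : ℝ) (hμ : 0 ≤ μ)
    (b : ℝ) (hb0 : 0 ≤ b) :
    IntegrableOn (fun τ => f τ + μ) (Set.Icc 0 b) := by
  apply MeasureTheory.Measure.integrableOn_of_bounded (M := C + μ) measure_Icc_lt_top.ne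
    ((hf.add_const μ).aestronglyMeasurable)
  rw [MeasureTheory.ae_restrict_iff' measurableSet_Icc]
  refine Filter.Eventually.of_forall fun x hx => ?_
  have h1 := hb x hx.1
  have h2 := h0 x hx.1
  rw [Real.norm_eq_abs, abs_of_nonneg (by linarith)]
  linarith

/-- Continuity of the exponential survival kernel on `ℝ≥0`. -/
lemma aux_contOn (f : ℝ → ℝ) (hf : Measurable f) (C : ℝ)
    (hb : ∀ θ, 0 ≤ θ → f θ ≤ C) (h0 : ∀ θ, 0 ≤ θ → 0 ≤ f θ) (μ : ℝ) (hμ : 0 ≤ μ) :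
    ContinuousOn (fun θ => Real.exp (-(∫ τ in (0:ℝ)..θ, (f τ + μ)))) (Set.Ici 0) := by
  have hG : ContinuousOn (fun x => ∫ τ in Set.Ioc (0:ℝ) x, (f τ + μ)) (Set.Ici 0) := by
    intro x hx
    have hx0 : (0:ℝ) ≤ x := hx
    have h1 := (intervalIntegral.continuousOn_primitive (μ := MeasureTheory.volume)
        (aux_integrableOn_Icc f hf C hb h0 μ hμ (x + 1) (by linarith))).continuousWithinAt
        (Set.mem_Icc.2 ⟨hx0, by linarith⟩)
    apply h1.mono_of_mem_nhdsWithin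
    rw [← Set.Ici_inter_Iic]
    exact Filter.inter_mem self_mem_nhdsWithin
      (mem_nhdsWithin_of_mem_nhds (Iic_mem_nhds (by linarith)))
  have hG' : ContinuousOn (fun θ => ∫ τ in (0:ℝ)..θ, (f τ + μ)) (Set.Ici 0) :=
    hG.congr fun x hx => intervalIntegral.integral_of_le hx
  exact Real.continuous_exp.comp_continuousOn hG'.neg

/-- Exponential domination of the survival kernel. -/
lemma aux_kernel_le (f : ℝ → ℝ) (hf : Measurable f) (C : ℝ)
    (hb : ∀ θ, 0 ≤ θ → f θ ≤ C) (h0 : ∀ θ, 0 ≤ θ → 0 ≤ f θ) (μ : ℝ) (hμ : 0 ≤ μ)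
    (θ : ℝ) (hθ : 0 ≤ θ) :
    Real.exp (-(∫ τ in (0:ℝ)..θ, (f τ + μ))) ≤ Real.exp (-(μ * θ)) := by
  rw [Real.exp_le_exp, neg_le_neg_iff]
  have hInt : IntervalIntegrable (fun τ => f τ + μ) MeasureTheory.volume 0 θ := by
    rw [intervalIntegrable_iff_integrableOn_Ioc_of_le hθ]
    exact (aux_integrableOn_Icc f hf C hb h0 μ hμ θ hθ).mono_set Set.Ioc_subset_Icc_self
  have := intervalIntegral.integral_mono_on (f := fun _ => μ) (g := fun τ => f τ + μ)
    hθ (intervalIntegrable_const) hInt (fun x hx => by have := h0 x hx.1; show μ ≤ f x + μ; linarith)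
  simpa [mul_comm] using this

/-- Integrability of weighted survival kernels on `ℝ≥0`. -/
lemma aux_integrable (f g : ℝ → ℝ) (hf : Measurable f) (Cf : ℝ)
    (hfb : ∀ θ, 0 ≤ θ → f θ ≤ Cf) (hf0 : ∀ θ, 0 ≤ θ → 0 ≤ f θ)
    (hg : Measurable g) (Cg : ℝ) (hgb : ∀ θ, 0 ≤ θ → |g θ| ≤ Cg)
    (μ : ℝ) (hμ : 0 < μ) :
    IntegrableOn (fun θ => g θ * Real.exp (-(∫ τ in (0:ℝ)..θ, (f τ + μ))))
      (Set.Ioi 0) := by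
  have hker : ContinuousOn (fun θ => Real.exp (-(∫ τ in (0:ℝ)..θ, (f τ + μ)))) (Set.Ici 0) :=
    aux_contOn f hf Cf hfb hf0 μ hμ.le
  have hmeas : AEStronglyMeasurable
      (fun θ => g θ * Real.exp (-(∫ τ in (0:ℝ)..θ, (f τ + μ))))
      (MeasureTheory.volume.restrict (Set.Ioi 0)) := by
    refine (hg.aestronglyMeasurable.restrict).mul ?_
    exact ((hker.mono Set.Ioi_subset_Ici_self).aemeasurable measurableSet_Ioi).aestronglyMeasurable
  have hdom : IntegrableOn (fun θ => Cg * Real.exp (-μ * θ)) (Set.Ioi 0) :=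
    (exp_neg_integrableOn_Ioi 0 hμ).const_mul Cg
  refine MeasureTheory.Integrable.mono' hdom hmeas ?_
  rw [MeasureTheory.ae_restrict_iff' measurableSet_Ioi]
  refine Filter.Eventually.of_forall fun x hx => ?_
  have hx0 : (0:ℝ) ≤ x := (Set.mem_Ioi.1 hx).le
  rw [Real.norm_eq_abs, abs_mul, abs_of_pos (Real.exp_pos _)]
  calc |g x| * Real.exp (-(∫ τ in (0:ℝ)..x, (f τ + μ)))
      ≤ Cg * Real.exp (-(μ * x)) :=
        mul_le_mul (hgb x hx0) (aux_kernel_le f hf Cf hfb hf0 μ hμ.le x hx0)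
          (Real.exp_pos _).le (le_trans (abs_nonneg _) (hgb 0 le_rfl))
    _ = Cg * Real.exp (-μ * x) := by rw [neg_mul]

/-- For any steady state, the constant `β*` satisfies the
scalar fixed-point equation
`β* = β*·(μN0/(p+β*+μ))·(1 + p(1−ε)/(ζε+β*(1−ε)+μ))·(R_A + R_I)`. -/
theorem steady_state_fixed_point_equation
    (μ N0 p ζ ε : ℝ) (βA βI k χ γA γI q ξ : ℝ → ℝ)
    (hμ : 0 < μ) (hN0 : 0 ≤ N0) (hp : 0 ≤ p) (hζ : 0 ≤ ζ) (hε : ε ∈ Set.Icc (0:ℝ) 1)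
    (hβA : CoeffBM βA) (hβI : CoeffBM βI) (hk : CoeffBM k) (hχ : CoeffBM χ)
    (hγA : CoeffBM γA) (hγI : CoeffBM γI) (hq : FracBM q) (hξ : FracBM ξ)
    (Sst Vst βst εst αst ιst : ℝ) (est ast ist : ℝ → ℝ)
    (hss : SteadyState μ N0 p ζ ε βA βI k χ γA γI q ξ Sst Vst βst εst αst ιst est ast ist) :
    βst = βst * ((μ * N0 / (p + βst + μ)) *
        (1 + p * (1 - ε) / (ζ * ε + βst * (1 - ε) + μ))) *
      (RAdef μ βA k q γA ξ χ + RIdef μ βI k q χ ξ γA γI) := by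
  obtain ⟨hkM, ⟨Ck, hkC⟩, hk0⟩ := hk
  obtain ⟨hβAM, ⟨CA, hAC⟩, hA0⟩ := hβA
  obtain ⟨hβIM, ⟨CI, hIC⟩, hI0⟩ := hβI
  obtain ⟨hχM, ⟨Cχ, hχC⟩, hχ0⟩ := hχ
  obtain ⟨hγAM, ⟨CγA, hγAC⟩, hγA0⟩ := hγA
  obtain ⟨hγIM, ⟨CγI, hγIC⟩, hγI0⟩ := hγI
  obtain ⟨hqM, hq01⟩ := hq
  obtain ⟨hξM, hξ01⟩ := hξ
  obtain ⟨-, -, -, -, -, -, -, -, -, hSeq, hVeq, hest, hast, hist, hεeq, hαeq, hιeq, hβeq⟩ := hss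
  -- measurability and bounds for the kernels' exponents
  set fA : ℝ → ℝ := fun τ => γA τ * ξ τ + χ τ * (1 - ξ τ) with hfA
  have hfA_meas : Measurable fA := (hγAM.mul hξM).add (hχM.mul (measurable_const.sub hξM))
  have hfA_bd : ∀ θ, 0 ≤ θ → fA θ ≤ CγA + Cχ := by
    intro θ hθ
    have h1 := hγAC θ hθ; have h2 := hχC θ hθ; have h3 := hγA0 θ hθ; have h4 := hχ0 θ hθ
    have h5 := (hξ01 θ hθ).1; have h6 := (hξ01 θ hθ).2
    simp only [hfA]; nlinarith
  have hfA_0 : ∀ θ, 0 ≤ θ → 0 ≤ fA θ := by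
    intro θ hθ
    have h3 := hγA0 θ hθ; have h4 := hχ0 θ hθ
    have h5 := (hξ01 θ hθ).1; have h6 := (hξ01 θ hθ).2
    simp only [hfA]; nlinarith
  -- integrability facts
  have intE : ∀ g : ℝ → ℝ, Measurable g → ∀ Cg : ℝ, (∀ θ, 0 ≤ θ → |g θ| ≤ Cg) →
      IntegrableOn (fun θ => g θ * piE μ k θ) (Set.Ioi 0) := by
    intro g hg Cg hCg
    simpa [piE] using aux_integrable k g hkM Ck hkC hk0 hg Cg hCg μ hμ
  have intA : ∀ g : ℝ → ℝ, Measurable g → ∀ Cg : ℝ, (∀ θ, 0 ≤ θ → |g θ| ≤ Cg) →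
      IntegrableOn (fun θ => g θ * piA μ γA ξ χ θ) (Set.Ioi 0) := by
    intro g hg Cg hCg
    simpa [piA] using aux_integrable fA g hfA_meas (CγA + Cχ) hfA_bd hfA_0 hg Cg hCg μ hμ
  have intI : ∀ g : ℝ → ℝ, Measurable g → ∀ Cg : ℝ, (∀ θ, 0 ≤ θ → |g θ| ≤ Cg) →
      IntegrableOn (fun θ => g θ * piI μ γI θ) (Set.Ioi 0) := by
    intro g hg Cg hCg
    simpa [piI] using aux_integrable γI g hγIM CγI hγIC hγI0 hg Cg hCg μ hμ
  -- bounds for the weights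
  have hkq_bd : ∀ θ, 0 ≤ θ → |k θ * q θ| ≤ Ck := by
    intro θ hθ
    have h1 := hkC θ hθ; have h2 := hk0 θ hθ
    have h3 := (hq01 θ hθ).1; have h4 := (hq01 θ hθ).2
    rw [abs_of_nonneg (by nlinarith)]; nlinarith
  have hkq'_bd : ∀ θ, 0 ≤ θ → |k θ * (1 - q θ)| ≤ Ck := by
    intro θ hθ
    have h1 := hkC θ hθ; have h2 := hk0 θ hθ
    have h3 := (hq01 θ hθ).1; have h4 := (hq01 θ hθ).2
    rw [abs_of_nonneg (by nlinarith)]; nlinarith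
  have hχξ_bd : ∀ θ, 0 ≤ θ → |χ θ * (1 - ξ θ)| ≤ Cχ := by
    intro θ hθ
    have h1 := hχC θ hθ; have h2 := hχ0 θ hθ
    have h3 := (hξ01 θ hθ).1; have h4 := (hξ01 θ hθ).2
    rw [abs_of_nonneg (by nlinarith)]; nlinarith
  have hβA_bd : ∀ θ, 0 ≤ θ → |βA θ| ≤ CA := fun θ hθ => by
    rw [abs_of_nonneg (hA0 θ hθ)]; exact hAC θ hθ
  have hβI_bd : ∀ θ, 0 ≤ θ → |βI θ| ≤ CI := fun θ hθ => by
    rw [abs_of_nonneg (hI0 θ hθ)]; exact hIC θ hθ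
  -- the three scalar relations
  have hα : αst = εst * ∫ s in Set.Ioi (0:ℝ), k s * q s * piE μ k s := by
    rw [hαeq, ← MeasureTheory.integral_const_mul]
    exact MeasureTheory.setIntegral_congr_fun measurableSet_Ioi fun θ hθ => by
      rw [hest θ (Set.mem_Ioi.1 hθ).le]; ring
  have hι : ιst = εst * (∫ s in Set.Ioi (0:ℝ), k s * (1 - q s) * piE μ k s) +
      αst * ∫ s in Set.Ioi (0:ℝ), χ s * (1 - ξ s) * piA μ γA ξ χ s := by
    rw [hιeq, ← MeasureTheory.integral_const_mul, ← MeasureTheory.integral_const_mul]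
    rw [MeasureTheory.setIntegral_congr_fun measurableSet_Ioi
      (g := fun θ => εst * (k θ * (1 - q θ) * piE μ k θ) +
        αst * (χ θ * (1 - ξ θ) * piA μ γA ξ χ θ))
      (fun θ hθ => by
        rw [hest θ (Set.mem_Ioi.1 hθ).le, hast θ (Set.mem_Ioi.1 hθ).le]; ring)]
    refine MeasureTheory.integral_add ?_ ?_
    · have := (intE (fun θ => k θ * (1 - q θ)) (hkM.mul (measurable_const.sub hqM))
        Ck hkq'_bd).const_mul εst
      simpa [mul_assoc] using this
    · have := (intA (fun θ => χ θ * (1 - ξ θ)) (hχM.mul (measurable_const.sub hξM))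
        Cχ hχξ_bd).const_mul αst
      simpa [mul_assoc] using this
  have hβ : βst = αst * (∫ s in Set.Ioi (0:ℝ), βA s * piA μ γA ξ χ s) +
      ιst * ∫ s in Set.Ioi (0:ℝ), βI s * piI μ γI s := by
    rw [hβeq, ← MeasureTheory.integral_const_mul, ← MeasureTheory.integral_const_mul]
    rw [MeasureTheory.setIntegral_congr_fun measurableSet_Ioi
      (g := fun θ => αst * (βA θ * piA μ γA ξ χ θ) + ιst * (βI θ * piI μ γI θ))
      (fun θ hθ => by
        rw [hast θ (Set.mem_Ioi.1 hθ).le, hist θ (Set.mem_Ioi.1 hθ).le]; ring)]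
    refine MeasureTheory.integral_add ?_ ?_
    · have := (intA βA hβAM CA hβA_bd).const_mul αst
      simpa [mul_assoc] using this
    · have := (intI βI hβIM CI hβI_bd).const_mul ιst
      simpa [mul_assoc] using this
  -- assemble
  simp only [RAdef, RIdef]
  conv_lhs => rw [hβ]
  rw [hι, hα, hεeq, hVeq, hSeq]
  ring
end
end

section
/- For every real β > 0, the equation g(β) = 1 holds if and only if b2·β² + b1·β + b0 = 0. -/
open MeasureTheory Filter

noncomputable section

/-- For every `β > 0`, the equation `g(β) = 1` holds if and
only if `b2·β² + b1·β + b0 = 0`. -/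
theorem gfun_eq_one_iff_quadratic
    (μ N0 p ζ ε RA RI : ℝ)
    (hμ : 0 < μ) (hN0 : 0 ≤ N0) (hp : 0 ≤ p) (hζ : 0 ≤ ζ) (hε : ε ∈ Set.Icc (0:ℝ) 1)
    (hRA : 0 ≤ RA) (hRI : 0 ≤ RI)
    (β : ℝ) (hβ : 0 < β) :
    gfun μ N0 p ζ ε RA RI β = 1 ↔
      (1 - ε) * β ^ 2 +
          ((p + μ) * (1 - ε) + ζ * ε + μ - μ * N0 * (1 - ε) * (RA + RI)) * β +
          (p + μ) * (ζ * ε + μ) *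
            (1 - (μ * N0 / (p + μ)) * (1 + p * (1 - ε) / (ζ * ε + μ)) * (RA + RI)) = 0 := by
  obtain ⟨hε0, hε1⟩ := hε
  have h1 : p + β + μ > 0 := by linarith
  have h2 : ζ * ε + β * (1 - ε) + μ > 0 := by nlinarith
  have h3 : p + μ > 0 := by linarith
  have h4 : ζ * ε + μ > 0 := by nlinarith
  unfold gfun
  rw [add_div' _ _ _ h2.ne', add_div' _ _ _ h4.ne']
  rw [div_mul_div_comm, div_mul_eq_mul_div, div_eq_one_iff_eq (by positivity)]
  have hconst : (p + μ) * (ζ * ε + μ) *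
      (1 - μ * N0 / (p + μ) * ((1 * (ζ * ε + μ) + p * (1 - ε)) / (ζ * ε + μ)) * (RA + RI)) =
      (p + μ) * (ζ * ε + μ) - μ * N0 * (ζ * ε + μ + p * (1 - ε)) * (RA + RI) := by
    field_simp
  rw [hconst]
  constructor <;> intro h
  · linear_combination -h
  · linear_combination -h
end
end

section
/- If R0 ≤ 1, then every real β ≥ 0 satisfying the fixed-point equation β = β·g(β) equals 0; equivalently, there is no β > 0 with g(β) = 1. -/
open MeasureTheory Filter

noncomputable section

/-- If `R₀ ≤ 1`, then every `β ≥ 0` satisfying the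
fixed-point equation `β = β·g(β)` equals `0`; equivalently, there is no
`β > 0` with `g(β) = 1`. -/
theorem no_positive_fixed_point_of_R0_le_one
    (μ N0 p ζ ε RA RI : ℝ)
    (hμ : 0 < μ) (hN0 : 0 ≤ N0) (hp : 0 ≤ p) (hζ : 0 ≤ ζ) (hε : ε ∈ Set.Icc (0:ℝ) 1)
    (hRA : 0 ≤ RA) (hRI : 0 ≤ RI)
    (hR0 : (μ * N0 / (p + μ)) * (1 + p * (1 - ε) / (ζ * ε + μ)) * (RA + RI) ≤ 1) :
    (∀ β : ℝ, 0 ≤ β → β = β * gfun μ N0 p ζ ε RA RI β → β = 0) ∧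
      ¬ ∃ β : ℝ, 0 < β ∧ gfun μ N0 p ζ ε RA RI β = 1 := by
  obtain ⟨hε0, hε1⟩ := hε
  have key : ∀ β : ℝ, 0 < β → gfun μ N0 p ζ ε RA RI β ≠ 1 := by
    intro β hβ h
    unfold gfun at h
    have hd1 : 0 < p + β + μ := by linarith
    have hd0 : 0 < p + μ := by linarith
    have hβε : 0 ≤ β * (1 - ε) := mul_nonneg hβ.le (by linarith)
    have he1 : 0 < ζ * ε + β * (1 - ε) + μ := by nlinarith [mul_nonneg hζ hε0]
    have he0 : 0 < ζ * ε + μ := by nlinarith [mul_nonneg hζ hε0]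
    have hpε : 0 ≤ p * (1 - ε) := mul_nonneg hp (by linarith)
    have hB1 : 0 < 1 + p * (1 - ε) / (ζ * ε + β * (1 - ε) + μ) := by positivity
    -- from h, deduce N0 > 0 and RA + RI > 0
    have hC : 0 < RA + RI := by
      by_contra hc
      push_neg at hc
      have : RA + RI = 0 := le_antisymm hc (by linarith)
      rw [this] at h; simp at h
    have hN0' : 0 < N0 := by
      by_contra hc
      push_neg at hc
      have : N0 = 0 := le_antisymm hc hN0
      rw [this] at h; simp at h
    have hA : μ * N0 / (p + β + μ) < μ * N0 / (p + μ) :=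
      div_lt_div_of_pos_left (by positivity) hd0 (by linarith)
    have hB : 1 + p * (1 - ε) / (ζ * ε + β * (1 - ε) + μ) ≤ 1 + p * (1 - ε) / (ζ * ε + μ) := by
      have := div_le_div_of_nonneg_left hpε he0 (by linarith : ζ * ε + μ ≤ ζ * ε + β * (1 - ε) + μ)
      linarith
    have hA1 : 0 ≤ μ * N0 / (p + β + μ) := by positivity
    have : (μ * N0 / (p + β + μ)) * (1 + p * (1 - ε) / (ζ * ε + β * (1 - ε) + μ)) * (RA + RI)
        < (μ * N0 / (p + μ)) * (1 + p * (1 - ε) / (ζ * ε + μ)) * (RA + RI) := by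
      apply mul_lt_mul_of_pos_right _ hC
      calc (μ * N0 / (p + β + μ)) * (1 + p * (1 - ε) / (ζ * ε + β * (1 - ε) + μ))
          ≤ (μ * N0 / (p + β + μ)) * (1 + p * (1 - ε) / (ζ * ε + μ)) := by
            exact mul_le_mul_of_nonneg_left hB hA1
        _ < (μ * N0 / (p + μ)) * (1 + p * (1 - ε) / (ζ * ε + μ)) := by
            apply mul_lt_mul_of_pos_right hA
            positivity
    linarith
  constructor
  · intro β hβ hfix
    by_contra hne
    have hβ' : 0 < β := lt_of_le_of_ne hβ (Ne.symm hne)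
    exact key β hβ' (by field_simp at hfix ⊢; nlinarith [hfix])
  · rintro ⟨β, hβ, hg⟩
    exact key β hβ hg
end
end

section
/- If R0 > 1, then there exists exactly one real β > 0 with g(β) = 1; equivalently, the polynomial b2·x² + b1·x + b0 has exactly one positive real root. -/
open MeasureTheory Filter

noncomputable section

set_option maxHeartbeats 1000000

/-- If `R₀ > 1`, then there is exactly one `β > 0` with
`g(β) = 1`; equivalently, the quadratic `b2·x² + b1·x + b0` has exactly one
positive real root. -/
theorem unique_positive_root_of_R0_gt_one
    (μ N0 p ζ ε RA RI : ℝ)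
    (hμ : 0 < μ) (hN0 : 0 ≤ N0) (hp : 0 ≤ p) (hζ : 0 ≤ ζ) (hε : ε ∈ Set.Icc (0:ℝ) 1)
    (hRA : 0 ≤ RA) (hRI : 0 ≤ RI)
    (hR0 : 1 < (μ * N0 / (p + μ)) * (1 + p * (1 - ε) / (ζ * ε + μ)) * (RA + RI)) :
    (∃! β : ℝ, 0 < β ∧ gfun μ N0 p ζ ε RA RI β = 1) ∧
      ∃! x : ℝ, 0 < x ∧
        (1 - ε) * x ^ 2 +
            ((p + μ) * (1 - ε) + ζ * ε + μ - μ * N0 * (1 - ε) * (RA + RI)) * x +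
            (p + μ) * (ζ * ε + μ) *
              (1 - (μ * N0 / (p + μ)) * (1 + p * (1 - ε) / (ζ * ε + μ)) * (RA + RI)) = 0 := by
  obtain ⟨hε0, hε1⟩ := hε
  have hpu : (0:ℝ) < p + μ := by linarith
  have hzu : (0:ℝ) < ζ * ε + μ := by nlinarith
  set b2 : ℝ := 1 - ε with hb2def
  set b1 : ℝ := (p + μ) * (1 - ε) + ζ * ε + μ - μ * N0 * (1 - ε) * (RA + RI) with hb1def
  set b0 : ℝ := (p + μ) * (ζ * ε + μ) *
      (1 - μ * N0 / (p + μ) * (1 + p * (1 - ε) / (ζ * ε + μ)) * (RA + RI)) with hb0def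
  clear_value b2 b1 b0
  rw [hb2def] at hR0
  have hb2 : 0 ≤ b2 := by rw [hb2def]; linarith
  have hb0 : b0 < 0 := by
    rw [hb0def]
    exact mul_neg_of_pos_of_neg (by positivity) (by linarith)
  -- uniqueness helper
  have huniq : ∀ x y : ℝ, 0 < x → b2 * x ^ 2 + b1 * x + b0 = 0 →
      0 < y → b2 * y ^ 2 + b1 * y + b0 = 0 → y = x := by
    intro x y hx hQx hy hQy
    have key : (y - x) * (b2 * (x + y) + b1) = 0 := by linear_combination hQy - hQx
    have h1 : (b2 * (x + y) + b1) * y = b2 * x * y - b0 := by linear_combination hQy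
    have hpos : 0 < b2 * (x + y) + b1 := by
      nlinarith [mul_nonneg (mul_nonneg hb2 hx.le) hy.le]
    rcases mul_eq_zero.mp key with h | h
    · linarith [sub_eq_zero.mp h]
    · exact absurd h hpos.ne'
  have hquad : ∃! x : ℝ, 0 < x ∧ b2 * x ^ 2 + b1 * x + b0 = 0 := by
    by_cases hεone : ε = 1
    · have hb2z : b2 = 0 := by rw [hb2def, hεone]; ring
      have hb1pos : 0 < b1 := by rw [hb1def, hεone]; nlinarith
      refine ⟨-b0 / b1, ⟨div_pos (neg_pos.2 hb0) hb1pos, ?_⟩, fun y hy => huniq _ y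
        (div_pos (neg_pos.2 hb0) hb1pos) ?_ hy.1 hy.2⟩
      · rw [hb2z]; field_simp; ring
      · rw [hb2z]; field_simp; ring
    · have hb2pos : 0 < b2 := by
        rw [hb2def]
        have : ε < 1 := lt_of_le_of_ne hε1 hεone
        linarith
      have hdisc : 0 < b1 ^ 2 - 4 * b2 * b0 := by nlinarith [sq_nonneg b1]
      set s : ℝ := Real.sqrt (b1 ^ 2 - 4 * b2 * b0) with hsdef
      have hs2 : s ^ 2 = b1 ^ 2 - 4 * b2 * b0 := Real.sq_sqrt hdisc.le
      have hsnn : 0 ≤ s := Real.sqrt_nonneg _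
      have hxpos : 0 < (-b1 + s) / (2 * b2) := by
        apply div_pos _ (by linarith)
        nlinarith
      have h2b2 : (2 * b2) ≠ 0 := by positivity
      have hroot : b2 * ((-b1 + s) / (2 * b2)) ^ 2 + b1 * ((-b1 + s) / (2 * b2)) + b0 = 0 := by
        field_simp
        linear_combination hs2
      exact ⟨_, ⟨hxpos, hroot⟩, fun y hy => huniq _ y hxpos hroot hy.1 hy.2⟩
  have hiff : ∀ β : ℝ, 0 < β →
      (gfun μ N0 p ζ ε RA RI β = 1 ↔ b2 * β ^ 2 + b1 * β + b0 = 0) := by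
    intro β hβ
    have hd1 : (0:ℝ) < p + β + μ := by linarith
    have hd2 : (0:ℝ) < ζ * ε + β * (1 - ε) + μ := by nlinarith
    have hb0' : b0 = (p + μ) * (ζ * ε + μ) -
        μ * N0 * (ζ * ε + μ + p * (1 - ε)) * (RA + RI) := by
      rw [hb0def]
      field_simp
    have hg : gfun μ N0 p ζ ε RA RI β * ((p + β + μ) * (ζ * ε + β * (1 - ε) + μ)) =
        μ * N0 * (ζ * ε + β * (1 - ε) + μ + p * (1 - ε)) * (RA + RI) := by
      unfold gfun
      field_simp
      try ring
    have hD : ((p + β + μ) * (ζ * ε + β * (1 - ε) + μ)) ≠ 0 := by positivity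
    constructor
    · intro h
      rw [h, one_mul] at hg
      rw [hb1def, hb2def, hb0']
      linear_combination hg
    · intro h
      rw [hb1def, hb2def, hb0'] at h
      have h2 : μ * N0 * (ζ * ε + β * (1 - ε) + μ + p * (1 - ε)) * (RA + RI) =
          (p + β + μ) * (ζ * ε + β * (1 - ε) + μ) := by linear_combination -h
      have h3 : gfun μ N0 p ζ ε RA RI β * ((p + β + μ) * (ζ * ε + β * (1 - ε) + μ)) =
          1 * ((p + β + μ) * (ζ * ε + β * (1 - ε) + μ)) := by rw [hg, one_mul]; exact h2
      exact mul_right_cancel₀ hD h3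
  obtain ⟨x, ⟨hx, hQx⟩, hxu⟩ := hquad
  refine ⟨⟨x, ⟨hx, (hiff x hx).mpr hQx⟩, fun y hy => hxu y ⟨hy.1, (hiff y hy.1).mp hy.2⟩⟩,
    ⟨x, ⟨hx, hQx⟩, hxu⟩⟩
end
end

section
/- If N0 > 0 and R_A + R_I > 0, then g is strictly decreasing on [0, ∞), g(0) = R0, and g(β) → 0 as β → ∞. -/
open MeasureTheory Filter

noncomputable section

/-- If `N0 > 0` and `R_A + R_I > 0`, then `g` is strictly
decreasing on `[0, ∞)`, `g(0) = R₀`, and `g(β) → 0` as `β → ∞`. -/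
theorem gfun_strictAnti_and_limits
    (μ N0 p ζ ε RA RI : ℝ)
    (hμ : 0 < μ) (hN0 : 0 ≤ N0) (hp : 0 ≤ p) (hζ : 0 ≤ ζ) (hε : ε ∈ Set.Icc (0:ℝ) 1)
    (hRA : 0 ≤ RA) (hRI : 0 ≤ RI)
    (hN0pos : 0 < N0) (hRARI : 0 < RA + RI) :
    StrictAntiOn (gfun μ N0 p ζ ε RA RI) (Set.Ici 0) ∧
      gfun μ N0 p ζ ε RA RI 0 =
        (μ * N0 / (p + μ)) * (1 + p * (1 - ε) / (ζ * ε + μ)) * (RA + RI) ∧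
      Tendsto (gfun μ N0 p ζ ε RA RI) atTop (nhds 0) := by
  obtain ⟨hε0, hε1⟩ := hε
  have h1ε : 0 ≤ 1 - ε := by linarith
  have hden2 : ∀ β : ℝ, 0 ≤ β → 0 < ζ * ε + β * (1 - ε) + μ := fun β hβ => by
    have := mul_nonneg hζ hε0
    have := mul_nonneg hβ h1ε
    linarith
  refine ⟨?_, ?_, ?_⟩
  · intro a ha b hb hab
    simp only [Set.mem_Ici] at ha hb
    unfold gfun
    have hd2a := hden2 a ha
    have hd2b := hden2 b hb
    have hB : 1 + p * (1 - ε) / (ζ * ε + b * (1 - ε) + μ) ≤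
        1 + p * (1 - ε) / (ζ * ε + a * (1 - ε) + μ) := by
      gcongr 1 + ?_ / ?_
      · rfl
      · nlinarith
    have hA : μ * N0 / (p + b + μ) < μ * N0 / (p + a + μ) := by
      gcongr
    have hBpos : 0 < 1 + p * (1 - ε) / (ζ * ε + b * (1 - ε) + μ) := by positivity
    have hApos : (0:ℝ) ≤ μ * N0 / (p + a + μ) := by positivity
    exact mul_lt_mul_of_pos_right (mul_lt_mul hA hB hBpos hApos) hRARI
  · unfold gfun; ring
  · have hub : ∀ β : ℝ, 0 ≤ β → gfun μ N0 p ζ ε RA RI β ≤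
        (μ * N0 / (p + β + μ)) * ((1 + p * (1 - ε) / μ) * (RA + RI)) := by
      intro β hβ
      have hd := hden2 β hβ
      unfold gfun
      rw [mul_assoc]
      gcongr
      nlinarith [mul_nonneg hζ hε0, mul_nonneg hβ h1ε]
    have hlb : ∀ β : ℝ, 0 ≤ β → 0 ≤ gfun μ N0 p ζ ε RA RI β := by
      intro β hβ
      have h2 := hden2 β hβ
      have h1 : (0:ℝ) < p + β + μ := by linarith
      unfold gfun
      positivity
    have htop : Tendsto (fun β : ℝ => p + β + μ) atTop atTop := by
      apply tendsto_atTop_add_const_right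
      exact tendsto_atTop_add_const_left _ _ tendsto_id
    have h0 : Tendsto (fun β : ℝ =>
        (μ * N0 / (p + β + μ)) * ((1 + p * (1 - ε) / μ) * (RA + RI))) atTop (nhds 0) := by
      have h := (Tendsto.div_atTop (f := fun _ : ℝ => μ * N0) tendsto_const_nhds htop).mul_const
        ((1 + p * (1 - ε) / μ) * (RA + RI))
      simpa using h
    refine tendsto_of_tendsto_of_tendsto_of_le_of_le' tendsto_const_nhds h0 ?_ ?_
    · filter_upwards [eventually_ge_atTop 0] with β hβ using hlb β hβ
    · filter_upwards [eventually_ge_atTop 0] with β hβ using hub β hβ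
end
end

section
/- If R0 ≤ 1, then every steady state is disease-free: β* = 0, ε* = α* = ι* = 0, and e*(θ) = a*(θ) = i*(θ) = 0 for all θ ≥ 0, while S* = μN0/(p+μ) and V* = pμN0/((p+μ)(ζε+μ)). -/
open MeasureTheory Filter

noncomputable section

section AuxLemmas

private lemma aux_ii {g : ℝ → ℝ} {C : ℝ} (hg : Measurable g)
    (hgu : ∀ θ, 0 ≤ θ → g θ ≤ C) (hgl : ∀ θ, 0 ≤ θ → 0 ≤ g θ)
    {θ : ℝ} (hθ : 0 ≤ θ) : IntervalIntegrable g MeasureTheory.volume 0 θ := by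
  rw [intervalIntegrable_iff_integrableOn_Ioc_of_le hθ]
  apply Measure.integrableOn_of_bounded (M := C)
  · exact ((measure_Ioc_lt_top).ne)
  · exact hg.aestronglyMeasurable
  · filter_upwards [ae_restrict_mem measurableSet_Ioc] with x hx
    rw [Real.norm_eq_abs, abs_of_nonneg (hgl x hx.1.le)]
    exact hgu x hx.1.le

private lemma aux_lb {g : ℝ → ℝ} {C m : ℝ} (hg : Measurable g)
    (hgu : ∀ θ, 0 ≤ θ → g θ ≤ C) (hgl : ∀ θ, 0 ≤ θ → m ≤ g θ) (hm : 0 ≤ m)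
    {θ : ℝ} (hθ : 0 ≤ θ) :
    Real.exp (-(∫ τ in (0:ℝ)..θ, g τ)) ≤ Real.exp (-(m * θ)) := by
  rw [Real.exp_le_exp, neg_le_neg_iff]
  have h0 : ∀ θ, 0 ≤ θ → 0 ≤ g θ := fun x hx => hm.trans (hgl x hx)
  calc m * θ = ∫ τ in (0:ℝ)..θ, m := by simp [mul_comm]
    _ ≤ ∫ τ in (0:ℝ)..θ, g τ := by
        apply intervalIntegral.integral_mono_on hθ intervalIntegrable_const
          (aux_ii hg hgu h0 hθ)
        exact fun x hx => hgl x hx.1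

private lemma aux_meas {g : ℝ → ℝ} {C : ℝ} (hg : Measurable g)
    (hgu : ∀ θ, 0 ≤ θ → g θ ≤ C) (hgl : ∀ θ, 0 ≤ θ → 0 ≤ g θ) :
    ∃ G : ℝ → ℝ, Measurable G ∧
      ∀ θ, 0 ≤ θ → G θ = Real.exp (-(∫ τ in (0:ℝ)..θ, g τ)) := by
  refine ⟨fun θ => Real.exp (-(∫ τ in Set.Ioc (0:ℝ) (max θ 0), g τ)), ?_, ?_⟩
  · apply Real.measurable_exp.comp
    apply Measurable.neg
    have hmono : Monotone (fun θ : ℝ => ∫ τ in Set.Ioc (0:ℝ) (max θ 0), g τ) := by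
      intro a b hab
      apply setIntegral_mono_set
      · exact (aux_ii hg hgu hgl (le_max_right b 0)).1
      · filter_upwards [ae_restrict_mem measurableSet_Ioc] with x hx
        exact hgl x hx.1.le
      · exact HasSubset.Subset.eventuallyLE
          (Set.Ioc_subset_Ioc_right (max_le_max hab le_rfl))
    exact hmono.measurable
  · intro θ hθ
    show Real.exp (-(∫ τ in Set.Ioc (0:ℝ) (max θ 0), g τ)) = _
    rw [max_eq_left hθ, intervalIntegral.integral_of_le hθ]

private lemma aux_int {g c : ℝ → ℝ} {C C' m : ℝ} (hg : Measurable g) (hm : 0 < m)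
    (hgu : ∀ θ, 0 ≤ θ → g θ ≤ C) (hgl : ∀ θ, 0 ≤ θ → m ≤ g θ)
    (hc : Measurable c) (hc' : ∀ θ, 0 ≤ θ → |c θ| ≤ C') :
    IntegrableOn (fun θ => c θ * Real.exp (-(∫ τ in (0:ℝ)..θ, g τ)))
      (Set.Ioi (0:ℝ)) := by
  have hgl0 : ∀ θ, 0 ≤ θ → 0 ≤ g θ := fun x hx => hm.le.trans (hgl x hx)
  obtain ⟨G, hGm, hGeq⟩ := aux_meas hg hgu hgl0
  apply Integrable.mono' (g := fun θ => C' * Real.exp (-m * θ))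
      ((exp_neg_integrableOn_Ioi 0 hm).const_mul C')
  · apply ((hc.mul hGm).aestronglyMeasurable (μ := volume.restrict (Set.Ioi 0))).congr
    filter_upwards [ae_restrict_mem measurableSet_Ioi] with x hx
    rw [Pi.mul_apply, hGeq x hx.le]
  · filter_upwards [ae_restrict_mem measurableSet_Ioi] with x hx
    have h1 := aux_lb hg hgu hgl hm.le hx.le
    have h2 := hc' x hx.le
    have h3 : (0:ℝ) < Real.exp (-(∫ τ in (0:ℝ)..x, g τ)) := Real.exp_pos _
    rw [norm_mul, Real.norm_eq_abs, Real.norm_eq_abs,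
      abs_of_pos h3, neg_mul]
    exact mul_le_mul h2 h1 h3.le ((abs_nonneg _).trans h2)

private lemma aux_alg (S D e p' : ℝ) (hD : D ≠ 0) :
    S + (1 - e) * (p' * S / D) = S * (1 + p' * (1 - e) / D) := by
  field_simp

end AuxLemmas

set_option maxHeartbeats 2000000 in
/-- If `R₀ ≤ 1`, then every steady state is disease-free:
`β* = ε* = α* = ι* = 0`, the densities `e*, a*, i*` vanish identically on
`ℝ≥0`, while `S* = μN0/(p+μ)` and `V* = pμN0/((p+μ)(ζε+μ))`. -/
theorem steady_state_disease_free_of_R0_le_one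
    (μ N0 p ζ ε : ℝ) (βA βI k χ γA γI q ξ : ℝ → ℝ)
    (hμ : 0 < μ) (hN0 : 0 ≤ N0) (hp : 0 ≤ p) (hζ : 0 ≤ ζ) (hε : ε ∈ Set.Icc (0:ℝ) 1)
    (hβA : CoeffBM βA) (hβI : CoeffBM βI) (hk : CoeffBM k) (hχ : CoeffBM χ)
    (hγA : CoeffBM γA) (hγI : CoeffBM γI) (hq : FracBM q) (hξ : FracBM ξ)
    (hR0 : R0def μ N0 p ζ ε βA βI k χ γA γI q ξ ≤ 1)
    (Sst Vst βst εst αst ιst : ℝ) (est ast ist : ℝ → ℝ)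
    (hss : SteadyState μ N0 p ζ ε βA βI k χ γA γI q ξ Sst Vst βst εst αst ιst est ast ist) :
    βst = 0 ∧ εst = 0 ∧ αst = 0 ∧ ιst = 0 ∧
      (∀ θ, 0 ≤ θ → est θ = 0 ∧ ast θ = 0 ∧ ist θ = 0) ∧
      Sst = μ * N0 / (p + μ) ∧
      Vst = p * μ * N0 / ((p + μ) * (ζ * ε + μ)) := by
  obtain ⟨hS0, hV0, hβ0, hε0, hα0, hι0, he0, ha0, hi0, hSeq, hVeq, heeq, haeq, hieq,
    hεeq, hαeq, hιeq, hβeq⟩ := hss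
  obtain ⟨hβAM, ⟨CβA, hβAC⟩, hβA0⟩ := hβA
  obtain ⟨hβIM, ⟨CβI, hβIC⟩, hβI0⟩ := hβI
  obtain ⟨hkM, ⟨Ck, hkC⟩, hk0⟩ := hk
  obtain ⟨hχM, ⟨Cχ, hχC⟩, hχ0⟩ := hχ
  obtain ⟨hγAM, ⟨CγA, hγAC⟩, hγA0⟩ := hγA
  obtain ⟨hγIM, ⟨CγI, hγIC⟩, hγI0⟩ := hγI
  obtain ⟨hqM, hqI⟩ := hq
  obtain ⟨hξM, hξI⟩ := hξ
  have hgEm : Measurable (fun τ => k τ + μ) := hkM.add_const μ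
  have hgEl : ∀ θ, 0 ≤ θ → μ ≤ k θ + μ := fun θ hθ => le_add_of_nonneg_left (hk0 θ hθ)
  have hgEu : ∀ θ, 0 ≤ θ → k θ + μ ≤ Ck + μ := fun θ hθ => by linarith [hkC θ hθ]
  have hgAm : Measurable (fun τ => γA τ * ξ τ + χ τ * (1 - ξ τ) + μ) :=
    ((hγAM.mul hξM).add (hχM.mul (measurable_const.sub hξM))).add_const μ
  have hgAl : ∀ θ, 0 ≤ θ → μ ≤ γA θ * ξ θ + χ θ * (1 - ξ θ) + μ := fun θ hθ => by
    nlinarith [hγA0 θ hθ, hχ0 θ hθ, (hξI θ hθ).1, (hξI θ hθ).2]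
  have hgAu : ∀ θ, 0 ≤ θ → γA θ * ξ θ + χ θ * (1 - ξ θ) + μ ≤ CγA + Cχ + μ := fun θ hθ => by
    nlinarith [hγA0 θ hθ, hχ0 θ hθ, (hξI θ hθ).1, (hξI θ hθ).2, hγAC θ hθ, hχC θ hθ]
  have hgIm : Measurable (fun τ => γI τ + μ) := hγIM.add_const μ
  have hgIl : ∀ θ, 0 ≤ θ → μ ≤ γI θ + μ := fun θ hθ => le_add_of_nonneg_left (hγI0 θ hθ)
  have hgIu : ∀ θ, 0 ≤ θ → γI θ + μ ≤ CγI + μ := fun θ hθ => by linarith [hγIC θ hθ]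
  have hI2 : IntegrableOn (fun s => k s * (1 - q s) * piE μ k s) (Set.Ioi 0) := by
    have := aux_int hgEm hμ hgEu hgEl (c := fun θ => k θ * (1 - q θ)) (hkM.mul (measurable_const.sub hqM)) (C' := Ck)
      (fun θ hθ => by
        rw [abs_of_nonneg (mul_nonneg (hk0 θ hθ) (sub_nonneg.mpr (hqI θ hθ).2))]
        nlinarith [(hqI θ hθ).1, (hqI θ hθ).2, hk0 θ hθ, hkC θ hθ])
    simpa [piE] using this
  have hI3 : IntegrableOn (fun s => χ s * (1 - ξ s) * piA μ γA ξ χ s) (Set.Ioi 0) := by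
    have := aux_int hgAm hμ hgAu hgAl (c := fun θ => χ θ * (1 - ξ θ)) (hχM.mul (measurable_const.sub hξM)) (C' := Cχ)
      (fun θ hθ => by
        rw [abs_of_nonneg (mul_nonneg (hχ0 θ hθ) (sub_nonneg.mpr (hξI θ hθ).2))]
        nlinarith [(hξI θ hθ).1, (hξI θ hθ).2, hχ0 θ hθ, hχC θ hθ])
    simpa [piA] using this
  have hI4 : IntegrableOn (fun s => βA s * piA μ γA ξ χ s) (Set.Ioi 0) := by
    have := aux_int hgAm hμ hgAu hgAl hβAM (C' := CβA) (fun θ hθ => by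
      rw [abs_of_nonneg (hβA0 θ hθ)]; exact hβAC θ hθ)
    simpa [piA] using this
  have hI5 : IntegrableOn (fun s => βI s * piI μ γI s) (Set.Ioi 0) := by
    have := aux_int hgIm hμ hgIu hgIl hβIM (C' := CβI) (fun θ hθ => by
      rw [abs_of_nonneg (hβI0 θ hθ)]; exact hβIC θ hθ)
    simpa [piI] using this
  have hαK : αst = εst * ∫ s in Set.Ioi (0:ℝ), k s * q s * piE μ k s := by
    rw [hαeq, ← integral_const_mul]
    apply setIntegral_congr_fun measurableSet_Ioi
    intro θ hθ
    dsimp only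
    rw [heeq θ (le_of_lt hθ)]; ring
  have hιK : ιst = εst * (∫ s in Set.Ioi (0:ℝ), k s * (1 - q s) * piE μ k s) +
      αst * ∫ s in Set.Ioi (0:ℝ), χ s * (1 - ξ s) * piA μ γA ξ χ s := by
    rw [hιeq, ← integral_const_mul, ← integral_const_mul,
      ← integral_add (hI2.const_mul εst) (hI3.const_mul αst)]
    apply setIntegral_congr_fun measurableSet_Ioi
    intro θ hθ
    dsimp only
    rw [heeq θ (le_of_lt hθ), haeq θ (le_of_lt hθ)]; ring
  have hβK : βst = αst * (∫ s in Set.Ioi (0:ℝ), βA s * piA μ γA ξ χ s) +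
      ιst * ∫ s in Set.Ioi (0:ℝ), βI s * piI μ γI s := by
    rw [hβeq, ← integral_const_mul, ← integral_const_mul,
      ← integral_add (hI4.const_mul αst) (hI5.const_mul ιst)]
    apply setIntegral_congr_fun measurableSet_Ioi
    intro θ hθ
    dsimp only
    rw [haeq θ (le_of_lt hθ), hieq θ (le_of_lt hθ)]; ring
  have hmain : βst = εst * (RAdef μ βA k q γA ξ χ + RIdef μ βI k q χ ξ γA γI) := by
    rw [hβK, hιK, hαK]; simp only [RAdef, RIdef]; ring
  have hpμ : (0:ℝ) < p + μ := by linarith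
  have hζμ : (0:ℝ) < ζ * ε + μ := by nlinarith [mul_nonneg hζ hε.1]
  have h1ε : (0:ℝ) ≤ 1 - ε := by linarith [hε.2]
  have hβz : βst = 0 := by
    by_contra hne
    have hpos : 0 < βst := lt_of_le_of_ne hβ0 (Ne.symm hne)
    simp only [R0def] at hR0
    obtain ⟨R, hRdef⟩ : ∃ R : ℝ,
        RAdef μ βA k q γA ξ χ + RIdef μ βI k q χ ξ γA γI = R := ⟨_, rfl⟩
    rw [hRdef] at hR0 hmain
    have hXR : (Sst + (1 - ε) * Vst) * R = 1 := by
      have h1 : βst * ((Sst + (1 - ε) * Vst) * R) = βst * 1 := by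
        rw [mul_one]
        conv_rhs => rw [hmain, hεeq]
        ring
      exact mul_left_cancel₀ hne h1
    have hX0 : 0 ≤ Sst + (1 - ε) * Vst := add_nonneg hS0 (mul_nonneg h1ε hV0)
    have hRpos : 0 < R := by
      by_contra hR
      push_neg at hR
      nlinarith [mul_nonpos_of_nonneg_of_nonpos hX0 hR]
    clear hRdef hαeq hιeq hβeq heeq haeq hieq hαK hιK hβK hI2 hI3 hI4 hI5
    clear hgEm hgAm hgIm hgEl hgEu hgAl hgAu hgIl hgIu
    clear hβAM hβIM hkM hχM hγAM hγIM hqM hξM hmain hεeq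
    rcases eq_or_lt_of_le (mul_nonneg hμ.le hN0) with hc | hc
    · have hS : Sst = 0 := by rw [hSeq, ← hc, zero_div]
      have hV : Vst = 0 := by rw [hVeq, hS, mul_zero, zero_div]
      rw [hS, hV] at hXR
      simp at hXR
    · have hA : (0:ℝ) < p + βst + μ := by linarith
      have hA' := hA.ne'
      have hD : (0:ℝ) < ζ * ε + βst * (1 - ε) + μ := by
        have h3 := mul_nonneg hpos.le h1ε
        have h4 := mul_nonneg hζ hε.1
        linarith
      have hD' := hD.ne'
      have hXval : Sst + (1 - ε) * Vst =
          (μ * N0 / (p + βst + μ)) *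
            (1 + p * (1 - ε) / (ζ * ε + βst * (1 - ε) + μ)) := by
        rw [hVeq, hSeq]; exact aux_alg _ _ _ _ hD'
      have h1 : μ * N0 / (p + βst + μ) < μ * N0 / (p + μ) :=
        div_lt_div_of_pos_left hc hpμ (by linarith)
      have h2 : p * (1 - ε) / (ζ * ε + βst * (1 - ε) + μ) ≤ p * (1 - ε) / (ζ * ε + μ) := by
        apply div_le_div_of_nonneg_left (mul_nonneg hp h1ε) hζμ
        nlinarith [mul_nonneg hpos.le h1ε]
      have hXlt : Sst + (1 - ε) * Vst <
          μ * N0 / (p + μ) * (1 + p * (1 - ε) / (ζ * ε + μ)) := by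
        rw [hXval]
        have hf1 : 0 ≤ p * (1 - ε) / (ζ * ε + βst * (1 - ε) + μ) :=
          div_nonneg (mul_nonneg hp h1ε) hD.le
        calc (μ * N0 / (p + βst + μ)) *
              (1 + p * (1 - ε) / (ζ * ε + βst * (1 - ε) + μ))
            < (μ * N0 / (p + μ)) *
              (1 + p * (1 - ε) / (ζ * ε + βst * (1 - ε) + μ)) :=
              mul_lt_mul_of_pos_right h1 (by linarith)
          _ ≤ μ * N0 / (p + μ) * (1 + p * (1 - ε) / (ζ * ε + μ)) := by
              apply mul_le_mul_of_nonneg_left (by linarith) (by positivity)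
      linarith [mul_lt_mul_of_pos_right hXlt hRpos]
  have hεz : εst = 0 := by rw [hεeq, hβz, zero_mul]
  have hαz : αst = 0 := by rw [hαK, hεz, zero_mul]
  have hιz : ιst = 0 := by rw [hιK, hεz, hαz, zero_mul, zero_mul, add_zero]
  refine ⟨hβz, hεz, hαz, hιz, fun θ hθ => ⟨?_, ?_, ?_⟩, ?_, ?_⟩
  · rw [heeq θ hθ, hεz, zero_mul]
  · rw [haeq θ hθ, hαz, zero_mul]
  · rw [hieq θ hθ, hιz, zero_mul]
  · rw [hSeq, hβz, add_zero]
  · rw [hVeq, hSeq, hβz]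
    simp only [zero_mul, add_zero]
    rw [← mul_div_assoc, div_div, ← mul_assoc]
end
end
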